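/- arXiv:2211.02706 — 5 statements merged into one kernel-verified Lean document; each statement's English description precedes it below -/
import Mathlib

section
/- Let (P_n) be a t-periodic sub-Markovian semigroup with cyclic classes A_0,...,A_{t-1}, and let Q_n := P_{nt} restricted to A_0. If ν_QS is a QSD for P with absorption rate θ > 0, then the normalized restriction ν := ν_QS(· ∩ A_0)/ν_QS(A_0) is a QSD for Q with absorption rate θ^t. -/
open MeasureTheory ProbabilityTheory

noncomputable def iterK {E : Type*} [MeasurableSpace E] (κ : Kernel E E) :
    ℕ → Kernel E E
  | 0 => Kernel.id
  | n + 1 => Kernel.comp κ (iterK κ n)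

lemma bind_smul_meas {E : Type*} [MeasurableSpace E] (μ : Measure E) (c : ENNReal)
    (f : E → Measure E) (hf : Measurable f) :
    Measure.bind (c • μ) f = c • Measure.bind μ f := by
  ext s hs
  rw [Measure.bind_apply hs hf.aemeasurable, Measure.smul_apply,
    Measure.bind_apply hs hf.aemeasurable, lintegral_smul_measure, smul_eq_mul]

lemma iterK_measurable {E : Type*} [MeasurableSpace E] (κ : Kernel E E) (n : ℕ) :
    Measurable (fun x => iterK κ n x) := (iterK κ n).measurable

lemma step_lemma
    {E : Type*} [MeasurableSpace E] (κ : Kernel E E) {t : ℕ} [NeZero t]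
    (A : Fin t → Set E)
    (hAmeas : ∀ i, MeasurableSet (A i))
    (hAdisj : ∀ i j, i ≠ j → Disjoint (A i) (A j))
    (hAcover : (⋃ i, A i) = Set.univ)
    (hsub : ∀ x, κ x Set.univ ≤ 1)
    (hper : ∀ i : Fin t, ∀ x ∈ A i,
      (∀ j : Fin t, j ≠ i + 1 → κ x (A j) = 0) ∧ κ x (A (i + 1)) = κ x Set.univ)
    (ν : Measure E) {θ : ℝ}
    (hQSD : Measure.bind ν (fun x => κ x) = ENNReal.ofReal θ • ν) (i : Fin t) :
    Measure.bind (ν.restrict (A i)) (fun x => κ x) = ENNReal.ofReal θ • ν.restrict (A (i + 1)) := by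
  -- concentration: for x ∈ A i, κ x s = κ x (s ∩ A (i+1))
  have hconc : ∀ x ∈ A i, ∀ s : Set E, MeasurableSet s → κ x s = κ x (s ∩ A (i + 1)) := by
    intro x hx s hs
    have hcompl : κ x (A (i + 1))ᶜ = 0 := by
      have hfin : κ x (A (i + 1)) ≠ ⊤ :=
        (((measure_mono (Set.subset_univ _)).trans (hsub x)).trans_lt ENNReal.one_lt_top).ne
      rw [measure_compl (hAmeas _) hfin, (hper i x hx).2, tsub_self]
    refine le_antisymm ?_ (measure_mono Set.inter_subset_left)
    calc κ x s ≤ κ x ((s ∩ A (i + 1)) ∪ (A (i + 1))ᶜ) := by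
          refine measure_mono fun y hy => ?_
          by_cases h : y ∈ A (i + 1)
          · exact Or.inl ⟨hy, h⟩
          · exact Or.inr h
      _ ≤ κ x (s ∩ A (i + 1)) + κ x (A (i + 1))ᶜ := measure_union_le _ _
      _ = κ x (s ∩ A (i + 1)) := by rw [hcompl, add_zero]
  ext s hs
  rw [Measure.bind_apply hs κ.measurable.aemeasurable]
  have hQ := congrArg (fun m : Measure E => m (s ∩ A (i + 1))) hQSD
  simp only [Measure.smul_apply, smul_eq_mul] at hQ
  rw [Measure.bind_apply (hs.inter (hAmeas _)) κ.measurable.aemeasurable] at hQ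
  -- decompose the lintegral over the partition
  have hdec : ∫⁻ x, κ x (s ∩ A (i + 1)) ∂ν
      = ∑' j, ∫⁻ x in A j, κ x (s ∩ A (i + 1)) ∂ν := by
    rw [← lintegral_iUnion hAmeas (fun a b hab => hAdisj a b hab), hAcover,
      Measure.restrict_univ]
  have hzero : ∀ j : Fin t, j ≠ i → ∫⁻ x in A j, κ x (s ∩ A (i + 1)) ∂ν = 0 := by
    intro j hj
    have h0 : ∫⁻ x in A j, κ x (s ∩ A (i + 1)) ∂ν = ∫⁻ x in A j, (0 : ENNReal) ∂ν := by
      refine setLIntegral_congr_fun (hAmeas j) (fun x hx => ?_)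
      have hk : κ x (A (i + 1)) = 0 := (hper j x hx).1 (i + 1) (by
        intro h
        exact hj (by simpa using (add_right_cancel h).symm))
      exact le_antisymm (le_trans (measure_mono Set.inter_subset_right) hk.le) zero_le
    rw [h0, lintegral_zero]
  have htsum : ∑' j, ∫⁻ x in A j, κ x (s ∩ A (i + 1)) ∂ν
      = ∫⁻ x in A i, κ x (s ∩ A (i + 1)) ∂ν := tsum_eq_single i hzero
  have heq : ∫⁻ x in A i, κ x (s ∩ A (i + 1)) ∂ν = ∫⁻ x in A i, κ x s ∂ν :=
    setLIntegral_congr_fun (hAmeas i)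
      (fun x hx => (hconc x hx s hs).symm)
  rw [hdec, htsum, heq] at hQ
  rw [hQ, Measure.smul_apply, Measure.restrict_apply hs, smul_eq_mul]

open Fin.NatCast in
lemma iter_lemma
    {E : Type*} [MeasurableSpace E] (κ : Kernel E E) {t : ℕ} [NeZero t]
    (A : Fin t → Set E)
    (hAmeas : ∀ i, MeasurableSet (A i))
    (hAdisj : ∀ i j, i ≠ j → Disjoint (A i) (A j))
    (hAcover : (⋃ i, A i) = Set.univ)
    (hsub : ∀ x, κ x Set.univ ≤ 1)
    (hper : ∀ i : Fin t, ∀ x ∈ A i,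
      (∀ j : Fin t, j ≠ i + 1 → κ x (A j) = 0) ∧ κ x (A (i + 1)) = κ x Set.univ)
    (ν : Measure E) {θ : ℝ} (hθ : 0 < θ)
    (hQSD : Measure.bind ν (fun x => κ x) = ENNReal.ofReal θ • ν) (n : ℕ) (i : Fin t) :
    Measure.bind (ν.restrict (A i)) (fun x => iterK κ n x)
      = ENNReal.ofReal (θ ^ n) • ν.restrict (A (i + (n : Fin t))) := by
  induction n with
  | zero =>
    simp only [iterK, Kernel.id_apply, pow_zero, ENNReal.ofReal_one, one_smul,
      Nat.cast_zero, add_zero]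
    exact Measure.bind_dirac
  | succ n ih =>
    have hcomp : Measure.bind (ν.restrict (A i)) (fun x => iterK κ (n + 1) x)
        = Measure.bind (Measure.bind (ν.restrict (A i)) (fun x => iterK κ n x))
            (fun x => κ x) := by
      rw [Measure.bind_bind (iterK_measurable κ n).aemeasurable κ.measurable.aemeasurable]
      simp only [iterK, Kernel.comp_apply]
    rw [hcomp, ih, bind_smul_meas _ _ _ κ.measurable,
      step_lemma κ A hAmeas hAdisj hAcover hsub hper ν hQSD,
      smul_smul, ← ENNReal.ofReal_mul (by positivity), ← pow_succ]
    congr 2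
    push_cast
    simp only [Nat.cast_succ, add_assoc]

open Fin.NatCast in
theorem stmt1
    {E : Type*} [MeasurableSpace E] (κ : Kernel E E) {t : ℕ} [NeZero t]
    (A : Fin t → Set E)
    (hAmeas : ∀ i, MeasurableSet (A i))
    (hAdisj : ∀ i j, i ≠ j → Disjoint (A i) (A j))
    (hAcover : (⋃ i, A i) = Set.univ)
    (hsub : ∀ x, κ x Set.univ ≤ 1)
    (hper : ∀ i : Fin t, ∀ x ∈ A i,
      (∀ j : Fin t, j ≠ i + 1 → κ x (A j) = 0) ∧ κ x (A (i + 1)) = κ x Set.univ)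
    (ν : Measure E) [IsProbabilityMeasure ν] {θ : ℝ} (hθ : 0 < θ) (hθ1 : θ ≤ 1)
    (hQSD : Measure.bind ν (fun x => κ x) = ENNReal.ofReal θ • ν) :
    Measure.bind ((ν (A 0))⁻¹ • ν.restrict (A 0)) (fun x => iterK κ t x)
      = ENNReal.ofReal (θ ^ t) • ((ν (A 0))⁻¹ • ν.restrict (A 0)) := by
  rw [bind_smul_meas _ _ _ (iterK_measurable κ t),
    iter_lemma κ A hAmeas hAdisj hAcover hsub hper ν hθ hQSD t 0]
  have : ((t : Fin t) : Fin t) = 0 := by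
    simp [Fin.natCast_self]
  rw [this, add_zero, smul_comm]
end

section
/- Let (P_n) be a t-periodic sub-Markovian semigroup with cyclic classes A_0,...,A_{t-1} and Q_n := P_{nt} on A_0, and let ν be a QSD for Q with absorption rate θ. If μ is any QSD for P such that μ(· ∩ A_0)/μ(A_0) = ν, then μ = (Σ_{i=0}^{t-1} θ^{-i/t} ν P_i)/(Σ_{i=0}^{t-1} θ^{-i/t} ν P_i 1_E); i.e., the QSD of P extending ν is unique. -/
open MeasureTheory ProbabilityTheory

lemma bind_smul_aux {E : Type*} [MeasurableSpace E] (r : ENNReal) (m : Measure E)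
    (f : E → Measure E) (hf : Measurable f) :
    Measure.bind (r • m) f = r • Measure.bind m f := by
  ext S hS
  rw [Measure.smul_apply, Measure.bind_apply hS hf.aemeasurable, Measure.bind_apply hS hf.aemeasurable,
    lintegral_smul_measure, smul_eq_mul]

lemma cyc_step {E : Type*} [MeasurableSpace E] (κ : Kernel E E) {t : ℕ} [NeZero t]
    (A : Fin t → Set E)
    (hAmeas : ∀ i, MeasurableSet (A i))
    (hAdisj : ∀ i j, i ≠ j → Disjoint (A i) (A j))
    (hAcover : (⋃ i, A i) = Set.univ)
    (hper : ∀ i : Fin t, ∀ x ∈ A i,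
      (∀ j : Fin t, j ≠ i + 1 → κ x (A j) = 0) ∧ κ x (A (i + 1)) = κ x Set.univ)
    (μ : Measure E) (i : Fin t) :
    (Measure.bind μ (fun x => κ x)).restrict (A (i+1)) =
      Measure.bind (μ.restrict (A i)) (fun x => κ x) := by
  have hnull : ∀ j : Fin t, ∀ x ∈ A j, κ x ((A (j+1))ᶜ) = 0 := by
    intro j x hx
    have hsubset : (A (j+1))ᶜ ⊆ ⋃ k ∈ Finset.univ.erase (j+1), A k := by
      intro y hy
      have hy' : y ∈ ⋃ k, A k := by rw [hAcover]; trivial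
      obtain ⟨k, hk⟩ := Set.mem_iUnion.mp hy'
      refine Set.mem_biUnion (Finset.mem_erase.mpr ⟨?_, Finset.mem_univ k⟩) hk
      rintro rfl; exact hy hk
    refine le_antisymm ?_ zero_le
    calc κ x ((A (j+1))ᶜ) ≤ κ x (⋃ k ∈ Finset.univ.erase (j+1), A k) :=
          measure_mono hsubset
      _ ≤ ∑ k ∈ Finset.univ.erase (j+1), κ x (A k) := measure_biUnion_finset_le _ _
      _ = 0 := Finset.sum_eq_zero fun k hk =>
          (hper j x hx).1 k (Finset.ne_of_mem_erase hk)
  ext S hS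
  rw [Measure.restrict_apply hS,
    Measure.bind_apply (hS.inter (hAmeas _)) (Kernel.measurable κ).aemeasurable,
    Measure.bind_apply hS (Kernel.measurable κ).aemeasurable,
    ← lintegral_indicator (hAmeas i)]
  refine lintegral_congr fun x => ?_
  have hx' : x ∈ ⋃ k, A k := by rw [hAcover]; trivial
  obtain ⟨j, hj⟩ := Set.mem_iUnion.mp hx'
  by_cases hji : j = i
  · subst hji
    rw [Set.indicator_of_mem hj]
    refine le_antisymm (measure_mono Set.inter_subset_left) ?_
    calc κ x S ≤ κ x ((S ∩ A (j+1)) ∪ (A (j+1))ᶜ) := by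
          refine measure_mono fun y hy => ?_
          by_cases hy2 : y ∈ A (j+1)
          · exact Or.inl ⟨hy, hy2⟩
          · exact Or.inr hy2
      _ ≤ κ x (S ∩ A (j+1)) + κ x ((A (j+1))ᶜ) := measure_union_le _ _
      _ = κ x (S ∩ A (j+1)) := by rw [hnull j x hj, add_zero]
  · rw [Set.indicator_of_notMem (Set.disjoint_left.mp (hAdisj j i hji) hj)]
    refine le_antisymm ?_ zero_le
    calc κ x (S ∩ A (i+1)) ≤ κ x (A (i+1)) := measure_mono Set.inter_subset_right
      _ = 0 := (hper j x hj).1 (i+1) fun h => hji (add_right_cancel h).symm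

theorem stmt3
    {E : Type*} [MeasurableSpace E] (κ : Kernel E E) {t : ℕ} [NeZero t]
    (A : Fin t → Set E)
    (hAmeas : ∀ i, MeasurableSet (A i))
    (hAdisj : ∀ i j, i ≠ j → Disjoint (A i) (A j))
    (hAcover : (⋃ i, A i) = Set.univ)
    (hsub : ∀ x, κ x Set.univ ≤ 1)
    (hper : ∀ i : Fin t, ∀ x ∈ A i,
      (∀ j : Fin t, j ≠ i + 1 → κ x (A j) = 0) ∧ κ x (A (i + 1)) = κ x Set.univ)
    (ν : Measure E) [IsProbabilityMeasure ν] (hν0 : ν (A 0) = 1)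
    {θ : ℝ} (hθ : 0 < θ) (hθ1 : θ ≤ 1)
    (hQSD : Measure.bind ν (fun x => iterK κ t x) = ENNReal.ofReal θ • ν)
    (μ : Measure E) [IsProbabilityMeasure μ]
    {ρ : ℝ} (hρ : 0 < ρ)
    (hμQSD : Measure.bind μ (fun x => κ x) = ENNReal.ofReal ρ • μ)
    (hμν : (μ (A 0))⁻¹ • μ.restrict (A 0) = ν) :
    μ = (((∑ i : Fin t, ENNReal.ofReal (θ ^ (-((i : ℕ) : ℝ) / (t : ℝ))) •
          Measure.bind ν (fun x => iterK κ (i : ℕ) x)) Set.univ))⁻¹ •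
        (∑ i : Fin t, ENNReal.ofReal (θ ^ (-((i : ℕ) : ℝ) / (t : ℝ))) •
          Measure.bind ν (fun x => iterK κ (i : ℕ) x)) := by
  have hmeasiter : ∀ n : ℕ, Measurable fun x => iterK κ n x := fun n => (iterK κ n).measurable
  have hA0top : μ (A 0) ≠ ⊤ := measure_ne_top μ _
  have hA0ne : μ (A 0) ≠ 0 := by
    intro h
    have h1 := congrArg (fun m : Measure E => m Set.univ) hμν
    simp only [Measure.smul_apply, Measure.restrict_apply MeasurableSet.univ,
      Set.univ_inter, h, smul_eq_mul, mul_zero] at h1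
    have : (ν Set.univ : ENNReal) = 1 := measure_univ
    rw [this] at h1
    exact zero_ne_one h1
  have hres : μ.restrict (A 0) = μ (A 0) • ν := by
    rw [← hμν, smul_smul, ENNReal.mul_inv_cancel hA0ne hA0top, one_smul]
  have hρ0 : (ENNReal.ofReal ρ) ≠ 0 := by
    simp [ENNReal.ofReal_eq_zero, not_le, hρ]
  have hρtop : (ENNReal.ofReal ρ) ≠ ⊤ := ENNReal.ofReal_ne_top
  -- main induction
  open Fin.NatCast in
  have claim : ∀ n : ℕ, n ≤ t →
      (ENNReal.ofReal ρ) ^ n • μ.restrict (A (n : Fin t)) =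
        μ (A 0) • Measure.bind ν (fun x => iterK κ n x) := by
    intro n
    induction n with
    | zero =>
      intro _
      have : (fun x : E => iterK κ 0 x) = fun x => Measure.dirac x := by
        funext x; simp [iterK, Kernel.id_apply]
      simp only [Nat.cast_zero, pow_zero, one_smul, this, Measure.bind_dirac]
      exact hres
    | succ n ih =>
      intro hn
      have ihn := ih (Nat.le_of_succ_le hn)
      have hc : ((n + 1 : ℕ) : Fin t) = (n : Fin t) + 1 := by push_cast; ring
      have hstep : (ENNReal.ofReal ρ) • μ.restrict (A ((n : Fin t) + 1)) =
          Measure.bind (μ.restrict (A (n : Fin t))) (fun x => κ x) := by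
        rw [← cyc_step κ A hAmeas hAdisj hAcover hper μ (n : Fin t), hμQSD,
          Measure.restrict_smul]
      calc (ENNReal.ofReal ρ) ^ (n + 1) • μ.restrict (A ((n + 1 : ℕ) : Fin t))
          = (ENNReal.ofReal ρ) ^ n •
            ((ENNReal.ofReal ρ) • μ.restrict (A ((n : Fin t) + 1))) := by
            rw [hc, pow_succ, smul_smul, mul_comm]
        _ = (ENNReal.ofReal ρ) ^ n •
            Measure.bind (μ.restrict (A (n : Fin t))) (fun x => κ x) := by rw [hstep]
        _ = Measure.bind ((ENNReal.ofReal ρ) ^ n • μ.restrict (A (n : Fin t)))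
            (fun x => κ x) := (bind_smul_aux _ _ _ (Kernel.measurable κ)).symm
        _ = Measure.bind (μ (A 0) • Measure.bind ν (fun x => iterK κ n x))
            (fun x => κ x) := by rw [ihn]
        _ = μ (A 0) • Measure.bind (Measure.bind ν (fun x => iterK κ n x))
            (fun x => κ x) := bind_smul_aux _ _ _ (Kernel.measurable κ)
        _ = μ (A 0) • Measure.bind ν (fun x => iterK κ (n + 1) x) := by
            rw [Measure.bind_bind (hmeasiter n).aemeasurable (Kernel.measurable κ).aemeasurable]
            have heq : (fun a : E => Measure.bind ((iterK κ n) a) fun x => κ x) =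
                fun x => iterK κ (n + 1) x := by
              funext a; simp [iterK, Kernel.comp_apply]
            rw [heq]
  -- deduce ρ^t = θ
  have hclt := claim t le_rfl
  open Fin.NatCast in
  rw [Fin.natCast_self, hQSD, hres] at hclt
  have hclt' := congrArg (fun m : Measure E => m Set.univ) hclt
  simp only [Measure.smul_apply, smul_eq_mul, measure_univ, mul_one] at hclt'
  have hpow : (ENNReal.ofReal ρ) ^ t = ENNReal.ofReal θ := by
    have h1 : (ENNReal.ofReal ρ) ^ t * μ (A 0) = μ (A 0) * ENNReal.ofReal θ := hclt'
    rw [mul_comm] at h1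
    exact (ENNReal.mul_right_inj hA0ne hA0top).mp h1
  have hrt : ρ ^ t = θ := by
    have h2 : ENNReal.ofReal (ρ ^ t) = ENNReal.ofReal θ := by
      rw [ENNReal.ofReal_pow hρ.le]; exact hpow
    exact (ENNReal.ofReal_eq_ofReal_iff (pow_nonneg hρ.le t) hθ.le).mp h2
  -- coefficient identity
  have hcoef : ∀ i : Fin t, ENNReal.ofReal (θ ^ (-((i : ℕ) : ℝ) / (t : ℝ))) =
      ((ENNReal.ofReal ρ) ^ (i : ℕ))⁻¹ := by
    intro i
    have htne : (t : ℝ) ≠ 0 := Nat.cast_ne_zero.mpr (NeZero.ne t)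
    have hreal : θ ^ (-((i : ℕ) : ℝ) / (t : ℝ)) = (ρ ^ (i : ℕ))⁻¹ := by
      rw [← hrt, ← Real.rpow_natCast ρ t, ← Real.rpow_mul hρ.le]
      have : (t : ℝ) * (-((i : ℕ) : ℝ) / (t : ℝ)) = -((i : ℕ) : ℝ) := by
        field_simp
      rw [this, Real.rpow_neg hρ.le, Real.rpow_natCast]
    rw [hreal, ENNReal.ofReal_inv_of_pos (pow_pos hρ _), ENNReal.ofReal_pow hρ.le]
  -- each restrict
  open Fin.NatCast in
  have hrestr : ∀ i : Fin t, μ.restrict (A i) =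
      ENNReal.ofReal (θ ^ (-((i : ℕ) : ℝ) / (t : ℝ))) •
        (μ (A 0) • Measure.bind ν (fun x => iterK κ (i : ℕ) x)) := by
    intro i
    have hci := claim (i : ℕ) i.isLt.le
    rw [Fin.cast_val_eq_self] at hci
    rw [hcoef i, ← hci, smul_smul, ENNReal.inv_mul_cancel (pow_ne_zero _ hρ0)
      (ENNReal.pow_ne_top hρtop), one_smul]
  -- decomposition
  set M : Measure E := ∑ i : Fin t, ENNReal.ofReal (θ ^ (-((i : ℕ) : ℝ) / (t : ℝ))) •
      Measure.bind ν (fun x => iterK κ (i : ℕ) x) with hM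
  have hdec : μ = ∑ i : Fin t, μ.restrict (A i) := by
    conv_lhs => rw [← Measure.restrict_univ (μ := μ), ← hAcover]
    rw [Measure.restrict_iUnion (fun i j h => hAdisj i j h) hAmeas, Measure.sum_fintype]
  have hμM : μ = μ (A 0) • M := by
    conv_lhs => rw [hdec]
    rw [hM, Finset.smul_sum]
    refine Finset.sum_congr rfl fun i _ => ?_
    rw [hrestr i, smul_smul, smul_smul, mul_comm]
  have hMuniv : μ (A 0) * M Set.univ = 1 := by
    have := congrArg (fun m : Measure E => m Set.univ) hμM
    simp only [Measure.smul_apply, smul_eq_mul, measure_univ] at this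
    exact this.symm
  have hMinv : μ (A 0) = (M Set.univ)⁻¹ := ENNReal.eq_inv_of_mul_eq_one_left hMuniv
  rw [hμM, hMinv]
end

section
/- (Spectral gap for the periodic chain.) In the same setting, let h ∈ B̂_V satisfy P̂_1 h = θ h with h(∂) = 0 and ν P_i h = 0 for all i ∈ {0,...,t-1}. If h is not identically zero on E, then |θ| ≤ θ_0 α^{1/t}. -/
open MeasureTheory ProbabilityTheory

section AuxLemmas

lemma iterK_finite {E : Type*} [MeasurableSpace E] (κ : Kernel E E) [IsFiniteKernel κ] :
    ∀ n, IsFiniteKernel (iterK κ n)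
  | 0 => by simp only [iterK]; infer_instance
  | n + 1 => by
      have := iterK_finite κ n
      simp only [iterK]; infer_instance

lemma myIntegrable_comp {α β γ : Type*} [MeasurableSpace α] [MeasurableSpace β]
    [MeasurableSpace γ] (η : Kernel β γ) [IsSFiniteKernel η] (κ : Kernel α β)
    [IsSFiniteKernel κ] (a : α) {f : γ → ℂ} (hf : Integrable f ((η ∘ₖ κ) a)) :
    Integrable (fun x => ∫ y, f y ∂(η x)) (κ a) := by
  rw [Kernel.comp_eq_snd_compProd, Kernel.snd_apply] at hf
  have h2 : Integrable (fun p : β × γ => f p.2) ((κ ⊗ₖ Kernel.prodMkLeft α η) a) := by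
    have := (integrable_map_measure hf.aestronglyMeasurable
      measurable_snd.aemeasurable).mp hf
    simpa [Function.comp_def] using this
  have := h2.integral_compProd
  simpa [Kernel.prodMkLeft_apply] using this

lemma myIntegral_comp {α β γ : Type*} [MeasurableSpace α] [MeasurableSpace β]
    [MeasurableSpace γ] (η : Kernel β γ) [IsSFiniteKernel η] (κ : Kernel α β)
    [IsSFiniteKernel κ] (a : α) {f : γ → ℂ} (hf : Integrable f ((η ∘ₖ κ) a)) :
    ∫ y, f y ∂((η ∘ₖ κ) a) = ∫ x, ∫ y, f y ∂(η x) ∂(κ a) := by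
  have hf' := hf
  rw [Kernel.comp_eq_snd_compProd, Kernel.snd_apply] at hf'
  have h2 : Integrable (fun p : β × γ => f p.2) ((κ ⊗ₖ Kernel.prodMkLeft α η) a) := by
    have := (integrable_map_measure hf'.aestronglyMeasurable
      measurable_snd.aemeasurable).mp hf'
    simpa [Function.comp_def] using this
  rw [Kernel.comp_eq_snd_compProd, Kernel.snd_apply,
    integral_map measurable_snd.aemeasurable hf'.aestronglyMeasurable]
  have := integral_compProd h2
  simpa [Kernel.prodMkLeft_apply] using this

lemma myIter_eig {E : Type*} [MeasurableSpace E] (κ : Kernel E E) [IsFiniteKernel κ]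
    (g : E → ℂ) (hg : Measurable g) (θ : ℂ) (hθ : θ ≠ 0)
    (heig : ∀ x, ∫ y, g y ∂(κ x) = θ * g x) :
    ∀ (n : ℕ) (x : E), Integrable g (iterK κ n x) →
      ∫ y, g y ∂(iterK κ n x) = θ ^ n * g x := by
  intro n
  induction n with
  | zero =>
    intro x _
    simp only [iterK, Kernel.id_apply, pow_zero, one_mul]
    exact integral_dirac' g x hg.stronglyMeasurable
  | succ n ih =>
    intro x hint
    haveI := iterK_finite κ n
    have hint' : Integrable g ((κ ∘ₖ iterK κ n) x) := hint
    have h1 : ∫ y, g y ∂(iterK κ (n+1) x) = ∫ z, (∫ y, g y ∂(κ z)) ∂(iterK κ n x) :=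
      myIntegral_comp κ (iterK κ n) x hint'
    have h2 : Integrable (fun z => ∫ y, g y ∂(κ z)) (iterK κ n x) :=
      myIntegrable_comp κ (iterK κ n) x hint'
    have h3 : Integrable (fun z => θ * g z) (iterK κ n x) := by
      refine h2.congr (Filter.Eventually.of_forall fun z => ?_)
      simp only [heig z]
    have h4 : Integrable g (iterK κ n x) := by
      have := h3.const_mul θ⁻¹
      refine this.congr (Filter.Eventually.of_forall fun z => ?_)
      simp only [← mul_assoc, inv_mul_cancel₀ hθ, one_mul]
    calc ∫ y, g y ∂(iterK κ (n+1) x) = ∫ z, θ * g z ∂(iterK κ n x) := by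
          rw [h1]; exact integral_congr_ae (Filter.Eventually.of_forall fun z => heig z)
      _ = θ * ∫ z, g z ∂(iterK κ n x) := by
          rw [← smul_eq_mul, ← integral_smul]; simp [smul_eq_mul]
      _ = θ ^ (n+1) * g x := by rw [ih x h4]; ring

end AuxLemmas

open Fin.NatCast

theorem stmt11
    {E : Type*} [MeasurableSpace E] (κ : Kernel E E) {t : ℕ} [NeZero t]
    (A : Fin t → Set E)
    (hAmeas : ∀ i, MeasurableSet (A i))
    (hAdisj : ∀ i j, i ≠ j → Disjoint (A i) (A j))
    (hAcover : (⋃ i, A i) = Set.univ)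
    (hsub : ∀ x, κ x Set.univ ≤ 1)
    (hper : ∀ i : Fin t, ∀ x ∈ A i,
      (∀ j : Fin t, j ≠ i + 1 → κ x (A j) = 0) ∧ κ x (A (i + 1)) = κ x Set.univ)
    (V η : E → ℝ) (hVmeas : Measurable V) (hV1 : ∀ x ∈ A (0 : Fin t), 1 ≤ V x)
    (hηmeas : Measurable η) (hη0 : ∀ x, 0 ≤ η x)
    (hηsupp : ∀ x ∉ A (0 : Fin t), η x = 0) (hηne : ∃ x, η x ≠ 0)
    (hbdd : BddAbove ((fun x => η x / V x) '' A (0 : Fin t)))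
    (ν : Measure E) [IsProbabilityMeasure ν] (hν0 : ν (A (0 : Fin t)) = 1)
    (hνV : Integrable V ν) (hνη : 0 < ∫ x, η x ∂ν)
    {θ0 CQ α : ℝ} (hθ0 : 0 < θ0) (hθ01 : θ0 ≤ 1) (hCQ : 0 ≤ CQ)
    (hα0 : 0 < α) (hα1 : α < 1)
    (hconv : ∀ f : E → ℝ, Measurable f → (∀ x ∈ A (0 : Fin t), |f x| ≤ V x) →
      (∀ x ∉ A (0 : Fin t), f x = 0) →
      ∀ k : ℕ, ∀ x ∈ A (0 : Fin t),
        |(θ0 ^ (k * t))⁻¹ * (∫ y, f y ∂(iterK κ (k * t) x)) - η x * ∫ y, f y ∂ν|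
          ≤ CQ * α ^ k * V x)
    (h : Option E → ℂ) {θ : ℂ}
    (hBV : ∃ a : ℝ, 0 < a ∧
      (Measurable (fun x : E => a * (h (some x)).re) ∧
        ∀ i : Fin t, ∀ x ∈ A (0 : Fin t),
          |∫ y, (A i).indicator (fun z => a * (h (some z)).re) y
              ∂(iterK κ (i : ℕ) x)| ≤ V x) ∧
      (Measurable (fun x : E => a * (h (some x)).im) ∧
        ∀ i : Fin t, ∀ x ∈ A (0 : Fin t),
          |∫ y, (A i).indicator (fun z => a * (h (some z)).im) y
              ∂(iterK κ (i : ℕ) x)| ≤ V x))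
    (heigE : ∀ x : E,
      (∫ y, h (some y) ∂(κ x)) + h none * (1 - ((((κ x) Set.univ).toReal : ℝ) : ℂ))
        = θ * h (some x))
    (heigd : h none = θ * h none)
    (hd0 : h none = 0)
    (hnull : ∀ i : Fin t, (∫ x, (∫ y, h (some y) ∂(iterK κ (i : ℕ) x)) ∂ν) = 0)
    (hne : ∃ x : E, h (some x) ≠ 0) :
    ‖θ‖ ≤ θ0 * α ^ ((1 : ℝ) / (t : ℝ)) := by
  obtain ⟨a, ha, ⟨hreMeas, hreB⟩, ⟨himMeas, himB⟩⟩ := hBV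
  set g : E → ℂ := fun x => h (some x) with hgdef
  have htpos : (0 : ℝ) < (t : ℝ) := by
    have := Nat.pos_of_ne_zero (NeZero.ne t)
    exact_mod_cast this
  -- measurability of g
  have hre : Measurable fun x => (g x).re := by
    have := hreMeas.const_mul a⁻¹
    simpa [← mul_assoc, inv_mul_cancel₀ ha.ne', one_mul] using this
  have him : Measurable fun x => (g x).im := by
    have := himMeas.const_mul a⁻¹
    simpa [← mul_assoc, inv_mul_cancel₀ ha.ne', one_mul] using this
  have hgmeas : Measurable g := by
    have : Measurable fun x => ((g x).re : ℂ) + ((g x).im : ℂ) * Complex.I :=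
      (Complex.measurable_ofReal.comp hre).add
        ((Complex.measurable_ofReal.comp him).mul_const _)
    simpa [Complex.re_add_im] using this
  have heig' : ∀ x, ∫ y, g y ∂(κ x) = θ * g x := by
    intro x
    have := heigE x
    rw [hd0] at this
    simpa using this
  -- contradiction setup
  by_contra hcon
  push_neg at hcon
  have hrpos : 0 < θ0 * α ^ ((1 : ℝ) / (t : ℝ)) := by positivity
  have hθne : θ ≠ 0 := by
    intro h0
    rw [h0] at hcon
    simp only [norm_zero] at hcon
    linarith
  haveI : IsFiniteKernel κ := ⟨⟨1, ENNReal.one_lt_top, fun x => hsub x⟩⟩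
  -- support lemmas
  have S1 : ∀ i : Fin t, ∀ x ∈ A i, κ x ((A (i+1))ᶜ) = 0 := by
    intro i x hx
    have hsubset : (A (i+1))ᶜ ⊆ ⋃ j, (if j = i + 1 then (∅ : Set E) else A j) := by
      intro y hy
      have : y ∈ ⋃ j, A j := by rw [hAcover]; trivial
      obtain ⟨j, hj⟩ := Set.mem_iUnion.mp this
      refine Set.mem_iUnion.mpr ⟨j, ?_⟩
      have hji : j ≠ i + 1 := by rintro rfl; exact hy hj
      simp [hji, hj]
    refine measure_mono_null hsubset (measure_iUnion_null fun j => ?_)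
    by_cases hj : j = i + 1
    · simp [hj]
    · simp [hj, (hper i x hx).1 j hj]
  have S2 : ∀ (n : ℕ) (i : Fin t), ∀ x ∈ A i,
      (iterK κ n x) ((A (i + (n : Fin t)))ᶜ) = 0 := by
    intro n
    induction n with
    | zero =>
      intro i x hx
      simp only [iterK, Kernel.id_apply, Nat.cast_zero, add_zero]
      rw [Measure.dirac_apply' _ (hAmeas i).compl]
      simp [hx]
    | succ n ih =>
      intro i x hx
      have hcomp : iterK κ (n+1) x = (iterK κ n x).bind κ := by
        show (κ ∘ₖ iterK κ n) x = _
        rw [Kernel.comp_apply]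
      rw [hcomp, Measure.bind_apply (hAmeas _).compl (Kernel.measurable κ).aemeasurable]
      have hae : ∀ᵐ y ∂(iterK κ n x), y ∈ A (i + (n : Fin t)) := by
        rw [MeasureTheory.ae_iff]
        simpa [Set.compl_def] using ih i x hx
      have hz : ∀ᵐ y ∂(iterK κ n x),
          κ y ((A (i + (((n:ℕ)+1 : ℕ) : Fin t)))ᶜ) = 0 := by
        filter_upwards [hae] with y hy
        have := S1 _ y hy
        have harith : i + (n : Fin t) + 1 = i + (((n:ℕ)+1 : ℕ) : Fin t) := by
          push_cast; exact add_assoc _ _ _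
        rwa [harith] at this
      rw [lintegral_congr_ae hz, lintegral_zero]
  -- transport of nonvanishing to A 0
  have step : ∀ (i : Fin t), ∀ x ∈ A i, g x ≠ 0 → ∃ y, y ∈ A (i+1) ∧ g y ≠ 0 := by
    intro i x hx hgx
    by_contra hno
    push_neg at hno
    have hae : ∀ᵐ y ∂(κ x), y ∈ A (i+1) := by
      rw [MeasureTheory.ae_iff]
      simpa [Set.compl_def] using S1 i x hx
    have hz : ∫ y, g y ∂(κ x) = 0 := by
      rw [integral_congr_ae (g := fun _ => (0:ℂ)) ?_, integral_zero]
      filter_upwards [hae] with y hy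
      exact hno y hy
    rw [heig' x] at hz
    exact mul_ne_zero hθne hgx hz
  obtain ⟨x₁, hx₁⟩ := hne
  have hx₁A : ∃ i : Fin t, x₁ ∈ A i := by
    have : x₁ ∈ ⋃ i, A i := by rw [hAcover]; trivial
    exact Set.mem_iUnion.mp this
  obtain ⟨i₁, hi₁⟩ := hx₁A
  have hiter : ∀ m : ℕ, ∃ y, y ∈ A (i₁ + (m : Fin t)) ∧ g y ≠ 0 := by
    intro m
    induction m with
    | zero => exact ⟨x₁, by simpa using hi₁, hx₁⟩
    | succ m ih =>
      obtain ⟨y, hy, hgy⟩ := ih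
      obtain ⟨z, hz, hgz⟩ := step _ y hy hgy
      refine ⟨z, ?_, hgz⟩
      have : i₁ + (m : Fin t) + 1 = i₁ + (((m+1 : ℕ)) : Fin t) := by push_cast; exact add_assoc _ _ _
      rwa [this] at hz
  obtain ⟨x₀, hx₀mem, hgx₀⟩ := hiter (t - (i₁ : ℕ))
  have hx₀ : x₀ ∈ A (0 : Fin t) := by
    have harith : i₁ + (((t - (i₁ : ℕ) : ℕ)) : Fin t) = 0 := by
      have h2 : ((((i₁ : ℕ) + (t - (i₁ : ℕ))) : ℕ) : Fin t) = 0 := by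
        rw [Nat.add_sub_cancel' (le_of_lt i₁.isLt), Fin.natCast_self]
      rw [Nat.cast_add, Fin.cast_val_eq_self] at h2
      exact h2
    rwa [harith] at hx₀mem
  -- cast arithmetic
  have hcast : ∀ k : ℕ, ((k * t : ℕ) : Fin t) = 0 := by
    intro k
    push_cast
    simp [Fin.natCast_self]
  haveI : ∀ n, IsFiniteKernel (iterK κ n) := iterK_finite κ
  have hμ0 : ∀ k : ℕ, (iterK κ (k * t) x₀) ((A (0 : Fin t))ᶜ) = 0 := by
    intro k
    have := S2 (k * t) 0 x₀ hx₀
    simpa [hcast k] using this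
  -- pointwise bound on A 0
  have hzeroval : ((0 : Fin t) : ℕ) = 0 := rfl
  have hdirac : ∀ (F : E → ℝ), StronglyMeasurable F → ∀ x : E,
      ∫ y, F y ∂(iterK κ ((0 : Fin t) : ℕ) x) = F x := by
    intro F hF x
    rw [hzeroval]
    simp only [iterK, Kernel.id_apply]
    exact integral_dirac' F x hF
  have hptre : ∀ x ∈ A (0 : Fin t), |a * (g x).re| ≤ V x := by
    intro x hx
    have := hreB 0 x hx
    rw [hdirac _ ((hreMeas.indicator (hAmeas 0)).stronglyMeasurable) x,
      Set.indicator_of_mem hx] at this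
    exact this
  have hptim : ∀ x ∈ A (0 : Fin t), |a * (g x).im| ≤ V x := by
    intro x hx
    have := himB 0 x hx
    rw [hdirac _ ((himMeas.indicator (hAmeas 0)).stronglyMeasurable) x,
      Set.indicator_of_mem hx] at this
    exact this
  have habs : ∀ x ∈ A (0 : Fin t), ‖g x‖ ≤ (2 / a) * V x := by
    intro x hx
    have h1 : |(g x).re| ≤ V x / a := by
      have hb := hptre x hx
      rw [abs_mul, abs_of_pos ha] at hb
      rw [le_div_iff₀ ha]
      linarith
    have h2 : |(g x).im| ≤ V x / a := by
      have hb := hptim x hx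
      rw [abs_mul, abs_of_pos ha] at hb
      rw [le_div_iff₀ ha]
      linarith
    calc ‖g x‖ ≤ |(g x).re| + |(g x).im| := Complex.norm_le_abs_re_add_abs_im _
      _ ≤ V x / a + V x / a := add_le_add h1 h2
      _ = (2 / a) * V x := by ring
  -- f := indicator of g on A 0
  set f : E → ℂ := (A (0 : Fin t)).indicator g with hfdef
  have hfmeas : Measurable f := hgmeas.indicator (hAmeas 0)
  have hfnorm : ∀ y, ‖f y‖ ≤ (2 / a) * (A (0 : Fin t)).indicator V y := by
    intro y
    by_cases hy : y ∈ A (0 : Fin t)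
    · rw [hfdef]
      simp only [Set.indicator_of_mem hy]
      exact habs y hy
    · rw [hfdef]
      simp [Set.indicator_of_notMem hy]
  -- Integrability of the truncated V on A 0 under the iterated kernel
  have hWint : ∀ (k : ℕ), Integrable ((A (0 : Fin t)).indicator V) (iterK κ (k * t) x₀) := by
    intro k
    set μ := iterK κ (k * t) x₀ with hμdef
    have hBtot : ∀ N : ℕ,
        ∫ y, (A (0 : Fin t)).indicator (fun z => min (V z) (N : ℝ)) y ∂μ
          ≤ θ0 ^ (k * t) * (CQ * α ^ k * V x₀ + η x₀ * ∫ z, |V z| ∂ν) := by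
      intro N
      set fN : E → ℝ := (A (0 : Fin t)).indicator (fun z => min (V z) (N : ℝ)) with hfN
      have hmN : Measurable fN := (hVmeas.min measurable_const).indicator (hAmeas 0)
      have hbN : ∀ z ∈ A (0 : Fin t), |fN z| ≤ V z := by
        intro z hz
        rw [hfN, Set.indicator_of_mem hz, abs_of_nonneg
          (le_min (le_trans zero_le_one (hV1 z hz)) (Nat.cast_nonneg N))]
        exact min_le_left _ _
      have h0N : ∀ z ∉ A (0 : Fin t), fN z = 0 := fun z hz =>
        Set.indicator_of_notMem hz _
      have hkey := hconv fN hmN hbN h0N k x₀ hx₀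
      have hνfN : Integrable fN ν := by
        refine hνV.abs.mono' hmN.aestronglyMeasurable
          (Filter.Eventually.of_forall fun z => ?_)
        by_cases hz : z ∈ A (0 : Fin t)
        · rw [Real.norm_eq_abs]
          calc |fN z| ≤ V z := hbN z hz
            _ ≤ |V z| := le_abs_self _
        · simp [h0N z hz, abs_nonneg]
      have hνfN_le : ∫ z, fN z ∂ν ≤ ∫ z, |V z| ∂ν := by
        refine integral_mono hνfN hνV.abs fun z => ?_
        by_cases hz : z ∈ A (0 : Fin t)
        · calc fN z ≤ |fN z| := le_abs_self _
            _ ≤ V z := hbN z hz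
            _ ≤ |V z| := le_abs_self _
        · rw [h0N z hz]; exact abs_nonneg _
      have h1 : (θ0 ^ (k * t))⁻¹ * (∫ y, fN y ∂μ)
          ≤ CQ * α ^ k * V x₀ + η x₀ * ∫ z, fN z ∂ν := by
        have := abs_le.mp hkey
        linarith [this.2]
      have h2 : η x₀ * ∫ z, fN z ∂ν ≤ η x₀ * ∫ z, |V z| ∂ν :=
        mul_le_mul_of_nonneg_left hνfN_le (hη0 x₀)
      have hθ0pow : (0:ℝ) < θ0 ^ (k * t) := pow_pos hθ0 _
      calc ∫ y, fN y ∂μ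
          = θ0 ^ (k * t) * ((θ0 ^ (k * t))⁻¹ * (∫ y, fN y ∂μ)) := by
            field_simp
        _ ≤ θ0 ^ (k * t) * (CQ * α ^ k * V x₀ + η x₀ * ∫ z, |V z| ∂ν) := by
            apply mul_le_mul_of_nonneg_left _ hθ0pow.le
            linarith
    -- monotone convergence
    set B := θ0 ^ (k * t) * (CQ * α ^ k * V x₀ + η x₀ * ∫ z, |V z| ∂ν) with hBdef
    have hlim : ∫⁻ y, ENNReal.ofReal ((A (0 : Fin t)).indicator V y) ∂μ
        ≤ ENNReal.ofReal B := by
      have hptsup : ∀ y, ENNReal.ofReal ((A (0 : Fin t)).indicator V y)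
          = ⨆ N : ℕ, ENNReal.ofReal
              ((A (0 : Fin t)).indicator (fun z => min (V z) (N : ℝ)) y) := by
        intro y
        by_cases hy : y ∈ A (0 : Fin t)
        · simp only [Set.indicator_of_mem hy]
          refine le_antisymm ?_ (iSup_le fun N =>
            ENNReal.ofReal_le_ofReal (min_le_left _ _))
          refine le_iSup_of_le ⌈V y⌉₊ ?_
          rw [min_eq_left (Nat.le_ceil _)]
        · simp [Set.indicator_of_notMem hy]
      rw [lintegral_congr fun y => hptsup y]
      have hmeasN : ∀ N : ℕ, Measurable fun y => ENNReal.ofReal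
          ((A (0 : Fin t)).indicator (fun z => min (V z) (N : ℝ)) y) := fun N =>
        ENNReal.measurable_ofReal.comp ((hVmeas.min measurable_const).indicator (hAmeas 0))
      have hmonoN : Monotone fun (N : ℕ) (y : E) => ENNReal.ofReal
          ((A (0 : Fin t)).indicator (fun z => min (V z) (N : ℝ)) y) := by
        intro N M hNM z
        apply ENNReal.ofReal_le_ofReal
        by_cases hz : z ∈ A (0 : Fin t)
        · simp only [Set.indicator_of_mem hz]
          exact min_le_min le_rfl (by exact_mod_cast hNM)
        · simp [Set.indicator_of_notMem hz]
      rw [lintegral_iSup hmeasN hmonoN]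
      · refine iSup_le fun N => ?_
        have hIntN : Integrable
            ((A (0 : Fin t)).indicator (fun z => min (V z) (N : ℝ))) μ := by
          refine (integrable_const (N:ℝ)).mono'
            ((hVmeas.min measurable_const).indicator (hAmeas 0)).aestronglyMeasurable
            (Filter.Eventually.of_forall fun z => ?_)
          by_cases hz : z ∈ A (0 : Fin t)
          · rw [Set.indicator_of_mem hz, Real.norm_eq_abs, abs_of_nonneg
              (le_min (le_trans zero_le_one (hV1 z hz)) (Nat.cast_nonneg N))]
            simp [min_le_right]
          · simp [Set.indicator_of_notMem hz, Nat.cast_nonneg]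
        have hnn : 0 ≤ᵐ[μ] (A (0 : Fin t)).indicator (fun z => min (V z) (N : ℝ)) := by
          refine Filter.Eventually.of_forall fun z => ?_
          by_cases hz : z ∈ A (0 : Fin t)
          · rw [Set.indicator_of_mem hz]
            exact le_min (le_trans zero_le_one (hV1 z hz)) (Nat.cast_nonneg N)
          · simp [Set.indicator_of_notMem hz]
        rw [← ofReal_integral_eq_lintegral_ofReal hIntN hnn]
        exact ENNReal.ofReal_le_ofReal (hBtot N)
    refine ⟨(hVmeas.indicator (hAmeas 0)).aestronglyMeasurable, ?_⟩
    rw [hasFiniteIntegral_iff_ofReal ?_]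
    · exact lt_of_le_of_lt hlim ENNReal.ofReal_lt_top
    · refine Filter.Eventually.of_forall fun z => ?_
      by_cases hz : z ∈ A (0 : Fin t)
      · rw [Set.indicator_of_mem hz]
        exact le_trans zero_le_one (hV1 z hz)
      · simp [Set.indicator_of_notMem hz]
  -- integrability of f and value of its integral
  have hνcompl : ν ((A (0 : Fin t))ᶜ) = 0 := by
    rw [measure_compl (hAmeas 0) (measure_ne_top _ _), hν0]
    simp
  have hνg : ∫ x, g x ∂ν = 0 := by
    have h0 := hnull 0
    have heq : (∫ x, (∫ y, h (some y) ∂(iterK κ ((0 : Fin t) : ℕ) x)) ∂ν)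
        = ∫ x, g x ∂ν := by
      apply integral_congr_ae
      refine Filter.Eventually.of_forall fun x => ?_
      rw [hzeroval]
      simp only [iterK, Kernel.id_apply]
      exact integral_dirac' g x hgmeas.stronglyMeasurable
    rwa [heq] at h0
  have hνf : Integrable f ν := by
    refine (hνV.abs.const_mul (2/a)).mono' hfmeas.aestronglyMeasurable
      (Filter.Eventually.of_forall fun y => ?_)
    calc ‖f y‖ ≤ (2/a) * (A (0 : Fin t)).indicator V y := hfnorm y
      _ ≤ (2/a) * |V y| := by
          apply mul_le_mul_of_nonneg_left _ (by positivity)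
          by_cases hy : y ∈ A (0 : Fin t)
          · rw [Set.indicator_of_mem hy]; exact le_abs_self _
          · simp [Set.indicator_of_notMem hy, abs_nonneg]
  have hνae : ∀ᵐ y ∂ν, y ∈ A (0 : Fin t) := by
    rw [MeasureTheory.ae_iff]
    simpa [Set.compl_def] using hνcompl
  have hfν0 : ∫ y, f y ∂ν = 0 := by
    have hfg : f =ᵐ[ν] g := by
      filter_upwards [hνae] with y hy
      rw [hfdef]; exact Set.indicator_of_mem hy g
    rw [integral_congr_ae hfg, hνg]
  -- the key quantitative bound
  have hkey : ∀ k : ℕ, (‖θ‖) ^ (k*t) * (a * ‖g x₀‖)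
      ≤ 2 * (CQ * α ^ k * V x₀) * θ0 ^ (k*t) := by
    intro k
    set μ := iterK κ (k*t) x₀ with hμdef
    have haeμ : ∀ᵐ y ∂μ, y ∈ A (0 : Fin t) := by
      rw [MeasureTheory.ae_iff]
      simpa [Set.compl_def] using hμ0 k
    have hfg : f =ᵐ[μ] g := by
      filter_upwards [haeμ] with y hy
      rw [hfdef]; exact Set.indicator_of_mem hy g
    have hfint : Integrable f μ := by
      refine ((hWint k).const_mul (2/a)).mono' hfmeas.aestronglyMeasurable
        (Filter.Eventually.of_forall fun y => hfnorm y)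
    have hgint : Integrable g μ := hfint.congr hfg
    have hval : ∫ y, g y ∂μ = θ ^ (k*t) * g x₀ :=
      myIter_eig κ g hgmeas θ hθne heig' (k*t) x₀ hgint
    have hfval : ∫ y, f y ∂μ = θ ^ (k*t) * g x₀ := by
      rw [integral_congr_ae hfg, hval]
    set z : ℂ := θ ^ (k*t) * g x₀ with hzdef
    have hFre : ∀ y, (A (0 : Fin t)).indicator (fun w => a * (h (some w)).re) y
        = a * (f y).re := by
      intro y; by_cases hy : y ∈ A (0 : Fin t)
      · rw [Set.indicator_of_mem hy, hfdef, Set.indicator_of_mem hy]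
      · rw [Set.indicator_of_notMem hy, hfdef, Set.indicator_of_notMem hy]; simp
    have hFim : ∀ y, (A (0 : Fin t)).indicator (fun w => a * (h (some w)).im) y
        = a * (f y).im := by
      intro y; by_cases hy : y ∈ A (0 : Fin t)
      · rw [Set.indicator_of_mem hy, hfdef, Set.indicator_of_mem hy]
      · rw [Set.indicator_of_notMem hy, hfdef, Set.indicator_of_notMem hy]; simp
    have hre_μ : ∫ y, (A (0 : Fin t)).indicator (fun w => a * (h (some w)).re) y ∂μ
        = a * z.re := by
      rw [integral_congr_ae (Filter.Eventually.of_forall hFre),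
        MeasureTheory.integral_const_mul]
      congr 1
      have := Complex.reCLM.integral_comp_comm hfint
      simpa [hfval] using this
    have him_μ : ∫ y, (A (0 : Fin t)).indicator (fun w => a * (h (some w)).im) y ∂μ
        = a * z.im := by
      rw [integral_congr_ae (Filter.Eventually.of_forall hFim),
        MeasureTheory.integral_const_mul]
      congr 1
      have := Complex.imCLM.integral_comp_comm hfint
      simpa [hfval] using this
    have hre_ν : ∫ y, (A (0 : Fin t)).indicator (fun w => a * (h (some w)).re) y ∂ν
        = 0 := by
      rw [integral_congr_ae (Filter.Eventually.of_forall hFre),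
        MeasureTheory.integral_const_mul]
      have h5 : ∫ y, (f y).re ∂ν = 0 := by
        have := Complex.reCLM.integral_comp_comm hνf
        simpa [hfν0] using this
      rw [h5, mul_zero]
    have him_ν : ∫ y, (A (0 : Fin t)).indicator (fun w => a * (h (some w)).im) y ∂ν
        = 0 := by
      rw [integral_congr_ae (Filter.Eventually.of_forall hFim),
        MeasureTheory.integral_const_mul]
      have h5 : ∫ y, (f y).im ∂ν = 0 := by
        have := Complex.imCLM.integral_comp_comm hνf
        simpa [hfν0] using this
      rw [h5, mul_zero]
    have hconvre := hconv ((A (0 : Fin t)).indicator (fun w => a * (h (some w)).re))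
      (hreMeas.indicator (hAmeas 0))
      (fun x hx => by rw [Set.indicator_of_mem hx]; exact hptre x hx)
      (fun x hx => Set.indicator_of_notMem hx _) k x₀ hx₀
    have hconvim := hconv ((A (0 : Fin t)).indicator (fun w => a * (h (some w)).im))
      (himMeas.indicator (hAmeas 0))
      (fun x hx => by rw [Set.indicator_of_mem hx]; exact hptim x hx)
      (fun x hx => Set.indicator_of_notMem hx _) k x₀ hx₀
    rw [hre_μ, hre_ν, mul_zero, sub_zero] at hconvre
    rw [him_μ, him_ν, mul_zero, sub_zero] at hconvim
    have hθpow : (0:ℝ) < θ0 ^ (k*t) := pow_pos hθ0 _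
    have hcpos : (0:ℝ) < (θ0 ^ (k*t))⁻¹ * a := by positivity
    have h1 : (θ0 ^ (k*t))⁻¹ * a * |z.re| ≤ CQ * α ^ k * V x₀ := by
      have : |(θ0 ^ (k*t))⁻¹ * (a * z.re)| = (θ0 ^ (k*t))⁻¹ * a * |z.re| := by
        rw [abs_mul, abs_mul, abs_of_pos (inv_pos.mpr hθpow), abs_of_pos ha, mul_assoc]
      rw [this] at hconvre
      exact hconvre
    have h2 : (θ0 ^ (k*t))⁻¹ * a * |z.im| ≤ CQ * α ^ k * V x₀ := by
      have : |(θ0 ^ (k*t))⁻¹ * (a * z.im)| = (θ0 ^ (k*t))⁻¹ * a * |z.im| := by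
        rw [abs_mul, abs_mul, abs_of_pos (inv_pos.mpr hθpow), abs_of_pos ha, mul_assoc]
      rw [this] at hconvim
      exact hconvim
    have hc : (θ0 ^ (k*t))⁻¹ * a * ‖z‖ ≤ 2 * (CQ * α ^ k * V x₀) := by
      calc (θ0 ^ (k*t))⁻¹ * a * ‖z‖
          ≤ (θ0 ^ (k*t))⁻¹ * a * (|z.re| + |z.im|) :=
            mul_le_mul_of_nonneg_left (Complex.norm_le_abs_re_add_abs_im z) hcpos.le
        _ = (θ0 ^ (k*t))⁻¹ * a * |z.re| + (θ0 ^ (k*t))⁻¹ * a * |z.im| := by ring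
        _ ≤ 2 * (CQ * α ^ k * V x₀) := by linarith
    have habsz : ‖z‖ = (‖θ‖) ^ (k*t) * ‖g x₀‖ := by
      rw [hzdef, norm_mul, norm_pow]
    have hfin : a * ‖z‖ ≤ 2 * (CQ * α ^ k * V x₀) * θ0 ^ (k*t) := by
      have h3 := mul_le_mul_of_nonneg_left hc hθpow.le
      calc a * ‖z‖
          = θ0 ^ (k*t) * ((θ0 ^ (k*t))⁻¹ * a * ‖z‖) := by
            field_simp
        _ ≤ θ0 ^ (k*t) * (2 * (CQ * α ^ k * V x₀)) := h3
        _ = 2 * (CQ * α ^ k * V x₀) * θ0 ^ (k*t) := by ring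
    calc (‖θ‖) ^ (k*t) * (a * ‖g x₀‖)
        = a * ‖z‖ := by rw [habsz]; ring
      _ ≤ 2 * (CQ * α ^ k * V x₀) * θ0 ^ (k*t) := hfin
  -- final contradiction
  set T := ‖θ‖ with hTdef
  have hTpos : 0 < T := lt_trans hrpos hcon
  have hq : (0:ℝ) < θ0 ^ t * α := by positivity
  have hpq : θ0 ^ t * α < T ^ t := by
    have h1 : (θ0 * α ^ ((1:ℝ)/(t:ℝ))) ^ t < T ^ t :=
      pow_lt_pow_left₀ hcon hrpos.le (NeZero.ne t)
    have h2 : (θ0 * α ^ ((1:ℝ)/(t:ℝ))) ^ t = θ0 ^ t * α := by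
      rw [mul_pow]
      congr 1
      rw [← Real.rpow_natCast (α ^ ((1:ℝ)/(t:ℝ))) t, ← Real.rpow_mul hα0.le,
        one_div, inv_mul_cancel₀ (ne_of_gt htpos), Real.rpow_one]
    rw [← h2]
    exact h1
  have hc0 : 0 < a * ‖g x₀‖ :=
    mul_pos ha (norm_pos_iff.mpr hgx₀)
  have hbound : ∀ k : ℕ, ((T ^ t) / (θ0 ^ t * α)) ^ k
      ≤ (2 * CQ * V x₀) / (a * ‖g x₀‖) := by
    intro k
    rw [div_pow, div_le_div_iff₀ (pow_pos hq k) hc0]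
    calc (T ^ t) ^ k * (a * ‖g x₀‖)
        = T ^ (k*t) * (a * ‖g x₀‖) := by rw [← pow_mul, mul_comm t k]
      _ ≤ 2 * (CQ * α ^ k * V x₀) * θ0 ^ (k*t) := hkey k
      _ = (2 * CQ * V x₀) * ((θ0 ^ t) ^ k * α ^ k) := by
          rw [← pow_mul, mul_comm t k]; ring
      _ = (2 * CQ * V x₀) * (θ0 ^ t * α) ^ k := by rw [mul_pow]
  obtain ⟨n, hn⟩ := pow_unbounded_of_one_lt
    ((2 * CQ * V x₀) / (a * ‖g x₀‖)) ((one_lt_div hq).mpr hpq)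
  exact absurd (hbound n) (not_le.mpr hn)
end

section
/- (Index-shift identity for the quasi-ergodic limit.) For any bounded measurable f : E → ℝ and any i ∈ {0,...,t-1}: Σ_{j=0}^{t-1} θ_0^{-(i+j)} ν P_{i+j}(f η_{2t-i-j}) = θ_0^{-t} Σ_{k=0}^{t-1} ν P_k(f P_{t-k} η); in particular the left-hand side does not depend on i. -/
open MeasureTheory ProbabilityTheory
open scoped ENNReal

instance iterK_finite_s16 {E : Type*} [MeasurableSpace E] (κ : Kernel E E) [IsFiniteKernel κ]
    (n : ℕ) : IsFiniteKernel (iterK κ n) := by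
  induction n with
  | zero => rw [iterK]; infer_instance
  | succ n ih => rw [iterK]; exact Kernel.IsFiniteKernel.comp κ (iterK κ n)

lemma iterK_add {E : Type*} [MeasurableSpace E] (κ : Kernel E E) [IsFiniteKernel κ]
    (a b : ℕ) : iterK κ (a + b) = (iterK κ a) ∘ₖ (iterK κ b) := by
  induction a with
  | zero => rw [iterK]; simp
  | succ n ih =>
      have h1 : n + 1 + b = (n + b) + 1 := by omega
      rw [h1]
      show κ ∘ₖ iterK κ (n + b) = _
      rw [ih, ← Kernel.comp_assoc]
      rfl

lemma integral_comp' {α β γ : Type*} [MeasurableSpace α] [MeasurableSpace β] [MeasurableSpace γ]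
    (η : Kernel β γ) [IsFiniteKernel η] (κ : Kernel α β) [IsFiniteKernel κ]
    (a : α) {g : γ → ℝ} (hg : Integrable g ((η ∘ₖ κ) a)) :
    ∫ z, g z ∂(η ∘ₖ κ) a = ∫ b, ∫ z, g z ∂η b ∂κ a := by
  rw [Kernel.comp_eq_snd_compProd] at hg ⊢
  rw [Kernel.snd_apply] at hg ⊢
  rw [integral_map measurable_snd.aemeasurable hg.1]
  have hg2 : Integrable (fun p : β × γ => g p.2) ((κ ⊗ₖ Kernel.prodMkLeft α η) a) :=
    (integrable_map_measure hg.1 measurable_snd.aemeasurable).mp hg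
  rw [ProbabilityTheory.integral_compProd hg2]
  simp [Kernel.prodMkLeft_apply]

lemma integral_bind' {α : Type*} [MeasurableSpace α] (κ : Kernel α α) [IsFiniteKernel κ]
    (μ : Measure α) [IsFiniteMeasure μ] {g : α → ℝ} (hg : Integrable g (μ.bind κ)) :
    ∫ z, g z ∂(μ.bind κ) = ∫ x, ∫ z, g z ∂κ x ∂μ := by
  have h1 : (κ ∘ₖ Kernel.const Unit μ) () = μ.bind κ := by
    rw [Kernel.comp_apply, Kernel.const_apply]
  rw [← h1] at hg ⊢
  rw [integral_comp' κ (Kernel.const Unit μ) () hg]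
  simp [Kernel.const_apply]

theorem stmt16
    {E : Type*} [MeasurableSpace E] (κ : Kernel E E) {t : ℕ} [NeZero t]
    (A : Fin t → Set E)
    (hAmeas : ∀ i, MeasurableSet (A i))
    (hAdisj : ∀ i j, i ≠ j → Disjoint (A i) (A j))
    (hAcover : (⋃ i, A i) = Set.univ)
    (hsub : ∀ x, κ x Set.univ ≤ 1)
    (hper : ∀ i : Fin t, ∀ x ∈ A i,
      (∀ j : Fin t, j ≠ i + 1 → κ x (A j) = 0) ∧ κ x (A (i + 1)) = κ x Set.univ)
    (η : E → ℝ) (hηmeas : Measurable η) (hη0 : ∀ x, 0 ≤ η x)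
    (hηsupp : ∀ x ∉ A (0 : Fin t), η x = 0)
    {θ0 : ℝ} (hθ0 : 0 < θ0) (hθ01 : θ0 ≤ 1)
    (hηeig : ∀ x ∈ A (0 : Fin t), ∫ y, η y ∂(iterK κ t x) = θ0 ^ t * η x)
    (ν : Measure E) [IsProbabilityMeasure ν] (hν0 : ν (A (0 : Fin t)) = 1)
    (hνeig : Measure.bind ν (fun x => iterK κ t x) = ENNReal.ofReal (θ0 ^ t) • ν)
    (hνη : ∫ x, η x ∂ν = 1)
    (ηf : ℕ → E → ℝ)
    (hηf : ∀ k : ℕ, ∀ x : E, ηf k x = (θ0 ^ k)⁻¹ * ∫ y, η y ∂(iterK κ k x)) :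
    ∀ f : E → ℝ, Measurable f → (∃ M : ℝ, ∀ x, |f x| ≤ M) →
      ∀ i : Fin t,
        ∑ j : Fin t, (θ0 ^ ((i : ℕ) + (j : ℕ)))⁻¹ *
            ∫ x, (∫ y, f y * ηf (2 * t - (i : ℕ) - (j : ℕ)) y
              ∂(iterK κ ((i : ℕ) + (j : ℕ)) x)) ∂ν
          = (θ0 ^ t)⁻¹ * ∑ k : Fin t,
              ∫ x, (∫ y, f y * (∫ z, η z ∂(iterK κ (t - (k : ℕ)) y))
                ∂(iterK κ (k : ℕ) x)) ∂ν := by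
  intro f hfmeas hMex i
  obtain ⟨M0, hM0⟩ := hMex
  set M := |M0| with hMdef
  have hM : ∀ x, |f x| ≤ M := fun x => (hM0 x).trans (le_abs_self M0)
  have hMnn : 0 ≤ M := abs_nonneg M0
  haveI hκfin : IsFiniteKernel κ := ⟨⟨1, ENNReal.one_lt_top, hsub⟩⟩
  set H : E → ℝ≥0∞ := fun z => ENNReal.ofReal (η z) with hHdef
  have hHmeas : Measurable H := ENNReal.measurable_ofReal.comp hηmeas
  set L : ℕ → E → ℝ≥0∞ := fun m y => ∫⁻ z, H z ∂(iterK κ m y) with hLdef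
  have hLmeas : ∀ m, Measurable (L m) := by
    intro m
    exact Measurable.lintegral_kernel_prod_right
      ((hHmeas.comp measurable_snd : Measurable fun p : E × E => H p.2))
  have hgt : ∀ (m : ℕ) (y : E), ∫ z, η z ∂(iterK κ m y) = (L m y).toReal := fun m y =>
    integral_eq_lintegral_of_nonneg_ae (Filter.Eventually.of_forall hη0)
      hηmeas.aestronglyMeasurable
  have hgmeas : ∀ m, Measurable fun y => ∫ z, η z ∂(iterK κ m y) := by
    intro m
    have h1 : (fun y => ∫ z, η z ∂(iterK κ m y)) = fun y => (L m y).toReal :=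
      funext (hgt m)
    rw [h1]; exact (hLmeas m).ennreal_toReal
  have hLadd : ∀ (a b : ℕ) (y : E), L (a + b) y = ∫⁻ z, L a z ∂(iterK κ b y) := by
    intro a b y
    show ∫⁻ z, H z ∂(iterK κ (a + b) y) = _
    rw [iterK_add, Kernel.lintegral_comp _ _ _ hHmeas]
  have hbind : ∀ a b : ℕ,
      Measure.bind ν ⇑(iterK κ (a + b)) = (ν.bind ⇑(iterK κ b)).bind ⇑(iterK κ a) := by
    intro a b
    rw [iterK_add]
    have h1 : ⇑(iterK κ a ∘ₖ iterK κ b) = fun x => (iterK κ b x).bind (iterK κ a) :=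
      funext fun x => Kernel.comp_apply _ _ x
    rw [h1, ← Measure.bind_bind (iterK κ b).measurable.aemeasurable (iterK κ a).measurable.aemeasurable]
  have hνbt : Measure.bind ν ⇑(iterK κ t) = ENNReal.ofReal (θ0 ^ t) • ν := hνeig
  have hηint : Integrable η ν := by
    by_contra hc
    rw [integral_undef hc] at hνη
    norm_num at hνη
  have hHν : ∫⁻ z, H z ∂ν < ⊤ := by
    have h1 : (fun z => H z) = fun z => (‖η z‖₊ : ℝ≥0∞) :=
      funext fun z => (Real.enorm_eq_ofReal (hη0 z)).symm
    calc ∫⁻ z, H z ∂ν = ∫⁻ z, (‖η z‖₊ : ℝ≥0∞) ∂ν := by rw [h1]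
      _ < ⊤ := hηint.2
  have hLtν : ∫⁻ y, L t y ∂ν < ⊤ := by
    have h1 : ∫⁻ z, H z ∂(ν.bind ⇑(iterK κ t)) = ∫⁻ y, L t y ∂ν :=
      Measure.lintegral_bind (iterK κ t).measurable.aemeasurable hHmeas.aemeasurable
    rw [← h1, hνbt, lintegral_smul_measure]
    exact ENNReal.mul_lt_top ENNReal.ofReal_lt_top hHν
  open Fin.NatCast in
  have hsupport : ∀ (m : ℕ) (r : Fin t) (z : E), z ∈ A r → ∀ s : Fin t,
      s ≠ r + (m : Fin t) → iterK κ m z (A s) = 0 := by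
    intro m
    induction m with
    | zero =>
      intro r z hz s hs
      show Kernel.id z (A s) = 0
      rw [Kernel.id_apply, Measure.dirac_apply' _ (hAmeas s)]
      have hzs : z ∉ A s := by
        intro hzs
        refine hs ?_
        have : s = r := by
          by_contra hne
          exact (Set.disjoint_left.mp (hAdisj s r hne)) hzs hz
        rw [this]; simp
      simp [Set.indicator_of_notMem hzs]
    | succ m ih =>
      intro r z hz s hs
      show (κ ∘ₖ iterK κ m) z (A s) = 0
      rw [Kernel.comp_apply' _ _ _ (hAmeas s)]
      have hnull : iterK κ m z ((A (r + (m : Fin t)))ᶜ) = 0 := by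
        have hsub2 : (A (r + (m : Fin t)))ᶜ ⊆
            ⋃ s' ∈ {s' : Fin t | s' ≠ r + (m : Fin t)}, A s' := by
          intro w hw
          obtain ⟨s', hs'⟩ : ∃ s', w ∈ A s' := by
            have hw2 : w ∈ ⋃ i, A i := by rw [hAcover]; trivial
            simpa using hw2
          have hne : s' ≠ r + (m : Fin t) := fun h => hw (h ▸ hs')
          exact Set.mem_biUnion hne hs'
        refine measure_mono_null hsub2 ?_
        refine (measure_biUnion_null_iff (Set.to_countable _)).mpr ?_
        intro s' hs'
        exact ih r z hz s' hs'
      refine (lintegral_eq_zero_iff (Kernel.measurable_coe κ (hAmeas s))).mpr ?_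
      rw [Filter.EventuallyEq, ae_iff]
      refine measure_mono_null ?_ hnull
      intro w hw
      intro hwA
      open Fin.NatCast in
      refine hw ((hper (r + (m : Fin t)) w hwA).1 s ?_)
      intro h
      refine hs ?_
      rw [h]
      push_cast
      simp only [Nat.cast_succ, add_assoc]
  set S : Set E := {z | L t z ≠ ENNReal.ofReal (θ0 ^ t) * H z} with hSdef
  have hSmeas : MeasurableSet S := by
    have h1 : S = {z | L t z < ENNReal.ofReal (θ0 ^ t) * H z} ∪
        {z | ENNReal.ofReal (θ0 ^ t) * H z < L t z} := by
      rw [hSdef]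
      ext z
      simp only [Set.mem_setOf_eq, Set.mem_union]
      exact ne_iff_lt_or_gt
    rw [h1]
    exact (measurableSet_lt (hLmeas t) (hHmeas.const_mul _)).union
      (measurableSet_lt (hHmeas.const_mul _) (hLmeas t))
  open Fin.NatCast in
  have hSsub : S ⊆ {z | L t z = ⊤} := by
    intro z hz
    by_contra hfin
    apply hz
    obtain ⟨r, hr⟩ : ∃ r, z ∈ A r := by
      have hz2 : z ∈ ⋃ i, A i := by rw [hAcover]; trivial
      simpa using hz2
    show L t z = ENNReal.ofReal (θ0 ^ t) * H z
    by_cases hr0 : r = 0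
    · subst hr0
      have h1 := hηeig z hr
      rw [hgt t z] at h1
      have h2 : L t z = ENNReal.ofReal ((L t z).toReal) :=
        (ENNReal.ofReal_toReal (by simpa using hfin)).symm
      rw [h2, h1, ENNReal.ofReal_mul (by positivity)]
    · have hz0 : z ∉ A 0 := fun h0 => (Set.disjoint_left.mp (hAdisj r 0 hr0)) hr h0
      have hH0 : H z = 0 := by simp [hHdef, hηsupp z hz0]
      have hker : iterK κ t z (A 0) = 0 := by
        refine hsupport t r z hr 0 ?_
        simp only [Fin.natCast_self, add_zero]
        exact fun h => hr0 h.symm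
      have hL0 : L t z = 0 := by
        show ∫⁻ w, H w ∂(iterK κ t z) = 0
        refine (lintegral_eq_zero_iff hHmeas).mpr ?_
        rw [Filter.EventuallyEq, ae_iff]
        refine measure_mono_null ?_ hker
        intro w hw
        by_contra hwA
        exact hw (by simp [hHdef, hηsupp w hwA])
      rw [hL0, hH0, mul_zero]
  have hνS : ν S = 0 := by
    refine measure_mono_null hSsub ?_
    have h1 : ∀ᵐ y ∂ν, L t y < ⊤ := ae_lt_top (hLmeas t) hLtν.ne
    rw [ae_iff] at h1
    refine Eq.trans ?_ h1
    congr 1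
    ext y
    simp [lt_top_iff_ne_top]
  have hbindS : ∀ k : ℕ, k ≤ t → ((ν.bind ⇑(iterK κ k)).bind ⇑(iterK κ (t - k))) S = 0 := by
    intro k hk
    rw [← hbind (t - k) k, show t - k + k = t from Nat.sub_add_cancel hk, hνbt]
    simp [hνS]
  have hYmeas : ∀ m : ℕ, MeasurableSet {y | iterK κ m y S ≠ 0} := by
    intro m
    have h1 := Kernel.measurable_coe (iterK κ m) hSmeas
    exact (h1 (measurableSet_singleton 0)).compl
  have haex : ∀ k : ℕ, k ≤ t → ∀ᵐ x ∂ν, iterK κ k x {y | iterK κ (t - k) y S ≠ 0} = 0 := by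
    intro k hk
    have h1 := hbindS k hk
    rw [Measure.bind_apply hSmeas (Kernel.measurable _).aemeasurable] at h1
    have h2 : ∀ᵐ y ∂(ν.bind ⇑(iterK κ k)), iterK κ (t - k) y S = 0 := by
      have := (lintegral_eq_zero_iff (Kernel.measurable_coe _ hSmeas)).mp h1
      filter_upwards [this] with y hy using hy
    have h3 : (ν.bind ⇑(iterK κ k)) {y | iterK κ (t - k) y S ≠ 0} = 0 := by
      rw [ae_iff] at h2
      exact h2
    rw [Measure.bind_apply (hYmeas _) (Kernel.measurable _).aemeasurable] at h3
    have h4 := (lintegral_eq_zero_iff (Kernel.measurable_coe _ (hYmeas _))).mp h3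
    filter_upwards [h4] with x hx using hx
  have hgood' : ∀ k : ℕ, k ≤ t → ∀ y : E, iterK κ (t - k) y S = 0 →
      ∫ z, η z ∂(iterK κ (t + (t - k)) y) = θ0 ^ t * ∫ z, η z ∂(iterK κ (t - k) y) := by
    intro k hk y hy
    have h1 : L (t + (t - k)) y = ENNReal.ofReal (θ0 ^ t) * L (t - k) y := by
      rw [hLadd t (t - k) y]
      have h2 : ∫⁻ z, L t z ∂(iterK κ (t - k) y) =
          ∫⁻ z, ENNReal.ofReal (θ0 ^ t) * H z ∂(iterK κ (t - k) y) := by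
        refine lintegral_congr_ae ?_
        rw [Filter.EventuallyEq, ae_iff]
        exact measure_mono_null (fun z hz => hz) hy
      rw [h2, lintegral_const_mul _ hHmeas]
    rw [hgt, hgt, h1, ENNReal.toReal_mul, ENNReal.toReal_ofReal (by positivity)]
  have hconst : ∀ a b : ℕ, a + b = 2 * t → (θ0 ^ a)⁻¹ * ((θ0 ^ b)⁻¹ * θ0 ^ t) = (θ0 ^ t)⁻¹ := by
    intro a b hab
    have h2 : θ0 ^ a * θ0 ^ b = θ0 ^ t * θ0 ^ t := by
      rw [← pow_add, ← pow_add]; congr 1; omega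
    have h3 : (θ0 ^ a)⁻¹ * (θ0 ^ b)⁻¹ = (θ0 ^ t)⁻¹ * (θ0 ^ t)⁻¹ := by
      rw [← mul_inv, ← mul_inv, h2]
    calc (θ0 ^ a)⁻¹ * ((θ0 ^ b)⁻¹ * θ0 ^ t)
        = (θ0 ^ a)⁻¹ * (θ0 ^ b)⁻¹ * θ0 ^ t := by ring
      _ = (θ0 ^ t)⁻¹ * ((θ0 ^ t)⁻¹ * θ0 ^ t) := by rw [h3]; ring
      _ = (θ0 ^ t)⁻¹ := by
          rw [inv_mul_cancel₀ (pow_ne_zero _ hθ0.ne'), mul_one]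
  have case1 : ∀ k : ℕ, k < t →
      (θ0 ^ k)⁻¹ * ∫ x, (∫ y, f y * ηf (2 * t - k) y ∂(iterK κ k x)) ∂ν
        = (θ0 ^ t)⁻¹ *
          ∫ x, (∫ y, f y * (∫ z, η z ∂(iterK κ (t - k) y)) ∂(iterK κ k x)) ∂ν := by
    intro k hk
    have hae := haex k hk.le
    have hstep : ∀ x : E, iterK κ k x {y | iterK κ (t - k) y S ≠ 0} = 0 →
        (∫ y, f y * ηf (2 * t - k) y ∂(iterK κ k x))
          = ((θ0 ^ (2 * t - k))⁻¹ * θ0 ^ t) *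
            ∫ y, f y * (∫ z, η z ∂(iterK κ (t - k) y)) ∂(iterK κ k x) := by
      intro x hx
      rw [← integral_const_mul]
      refine integral_congr_ae ?_
      have hae2 : ∀ᵐ y ∂(iterK κ k x), iterK κ (t - k) y S = 0 := by
        rw [ae_iff]
        exact measure_mono_null (fun y hy => hy) hx
      filter_upwards [hae2] with y hy
      rw [hηf, show 2 * t - k = t + (t - k) by omega, hgood' k hk.le y hy]
      ring
    have h5 : ∫ x, (∫ y, f y * ηf (2 * t - k) y ∂(iterK κ k x)) ∂ν
        = ((θ0 ^ (2 * t - k))⁻¹ * θ0 ^ t) *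
          ∫ x, (∫ y, f y * (∫ z, η z ∂(iterK κ (t - k) y)) ∂(iterK κ k x)) ∂ν := by
      rw [← integral_const_mul]
      refine integral_congr_ae ?_
      filter_upwards [hae] with x hx using hstep x hx
    rw [h5, ← mul_assoc]
    congr 1
    exact hconst k (2 * t - k) (by omega)
  have case2 : ∀ k : ℕ, k < t →
      (θ0 ^ (t + k))⁻¹ * ∫ x, (∫ y, f y * ηf (t - k) y ∂(iterK κ (t + k) x)) ∂ν
        = (θ0 ^ t)⁻¹ *
          ∫ x, (∫ y, f y * (∫ z, η z ∂(iterK κ (t - k) y)) ∂(iterK κ k x)) ∂ν := by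
    intro k hk
    set h : E → ℝ := fun y => f y * ∫ z, η z ∂(iterK κ (t - k) y) with hhdef
    have hhmeas : Measurable h := hfmeas.mul (hgmeas (t - k))
    have hhb : ∀ y, (‖h y‖₊ : ℝ≥0∞) ≤ ENNReal.ofReal M * L (t - k) y := by
      intro y
      show ‖h y‖ₑ ≤ _
      rw [Real.enorm_eq_ofReal_abs]
      calc ENNReal.ofReal |h y| ≤ ENNReal.ofReal (M * (L (t - k) y).toReal) := by
            refine ENNReal.ofReal_le_ofReal ?_
            rw [hhdef]
            simp only
            rw [hgt, abs_mul, abs_of_nonneg ENNReal.toReal_nonneg]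
            exact mul_le_mul_of_nonneg_right (hM y) ENNReal.toReal_nonneg
        _ = ENNReal.ofReal M * ENNReal.ofReal ((L (t - k) y).toReal) :=
            ENNReal.ofReal_mul hMnn
        _ ≤ ENNReal.ofReal M * L (t - k) y :=
            mul_le_mul_right ENNReal.ofReal_toReal_le _
    have hlb : ∀ (m : ℕ) (w : E), ∫⁻ y, (‖h y‖₊ : ℝ≥0∞) ∂(iterK κ m w)
        ≤ ENNReal.ofReal M * L ((t - k) + m) w := by
      intro m w
      calc ∫⁻ y, (‖h y‖₊ : ℝ≥0∞) ∂(iterK κ m w)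
          ≤ ∫⁻ y, ENNReal.ofReal M * L (t - k) y ∂(iterK κ m w) := lintegral_mono hhb
        _ = ENNReal.ofReal M * ∫⁻ y, L (t - k) y ∂(iterK κ m w) :=
            lintegral_const_mul _ (hLmeas _)
        _ = ENNReal.ofReal M * L ((t - k) + m) w := by rw [hLadd]
    have hL2t : ∀ᵐ x ∂ν, L (2 * t) x < ⊤ := by
      refine ae_lt_top (hLmeas _) ?_
      have h1 : ∫⁻ x, L (2 * t) x ∂ν = ∫⁻ y, L t y ∂(ν.bind ⇑(iterK κ t)) := by
        rw [Measure.lintegral_bind (Kernel.measurable _).aemeasurable (hLmeas t).aemeasurable]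
        refine lintegral_congr fun x => ?_
        rw [show 2 * t = t + t by omega, hLadd]
      rw [h1, hνbt, lintegral_smul_measure]
      exact (ENNReal.mul_lt_top ENNReal.ofReal_lt_top hLtν).ne
    have hint : ∀ᵐ x ∂ν, Integrable h ((iterK κ (t + k)) x) := by
      filter_upwards [hL2t] with x hx
      refine ⟨hhmeas.aestronglyMeasurable, ?_⟩
      show ∫⁻ y, (‖h y‖₊ : ℝ≥0∞) ∂(iterK κ (t + k) x) < ⊤
      refine lt_of_le_of_lt (hlb (t + k) x) ?_
      rw [show (t - k) + (t + k) = 2 * t by omega]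
      exact ENNReal.mul_lt_top ENNReal.ofReal_lt_top hx
    have hcomp : iterK κ (t + k) = (iterK κ k) ∘ₖ (iterK κ t) := by
      rw [show t + k = k + t by omega, iterK_add]
    have hstep1 : ∀ᵐ x ∂ν, ∫ y, h y ∂(iterK κ (t + k) x)
        = ∫ w, (∫ y, h y ∂(iterK κ k w)) ∂(iterK κ t x) := by
      filter_upwards [hint] with x hx
      rw [hcomp] at hx ⊢
      exact integral_comp' _ _ x hx
    set G : E → ℝ := fun w => ∫ y, h y ∂(iterK κ k w) with hGdef
    have hGmeas : StronglyMeasurable G :=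
      (hhmeas.stronglyMeasurable.comp_measurable
        (measurable_snd : Measurable fun p : E × E => p.2)).integral_kernel_prod_right'
    have hGb : ∀ w, (‖G w‖₊ : ℝ≥0∞) ≤ ENNReal.ofReal M * L t w := by
      intro w
      calc (‖G w‖₊ : ℝ≥0∞) ≤ ∫⁻ y, (‖h y‖₊ : ℝ≥0∞) ∂(iterK κ k w) :=
            enorm_integral_le_lintegral_enorm _
        _ ≤ ENNReal.ofReal M * L ((t - k) + k) w := hlb k w
        _ = ENNReal.ofReal M * L t w := by rw [show (t - k) + k = t by omega]
    have hGint : Integrable G ν := by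
      refine ⟨hGmeas.aestronglyMeasurable, ?_⟩
      show ∫⁻ w, (‖G w‖₊ : ℝ≥0∞) ∂ν < ⊤
      calc ∫⁻ w, (‖G w‖₊ : ℝ≥0∞) ∂ν ≤ ∫⁻ w, ENNReal.ofReal M * L t w ∂ν :=
            lintegral_mono hGb
        _ = ENNReal.ofReal M * ∫⁻ w, L t w ∂ν := lintegral_const_mul _ (hLmeas t)
        _ < ⊤ := ENNReal.mul_lt_top ENNReal.ofReal_lt_top hLtν
    have hGbind : Integrable G (ν.bind ⇑(iterK κ t)) := by
      rw [hνbt]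
      refine (integrable_smul_measure ?_ ENNReal.ofReal_ne_top).mpr hGint
      simp only [ne_eq, ENNReal.ofReal_eq_zero, not_le]
      positivity
    have hstep2 : ∫ x, (∫ w, G w ∂(iterK κ t x)) ∂ν = θ0 ^ t * ∫ w, G w ∂ν := by
      rw [← integral_bind' (iterK κ t) ν hGbind, hνbt, integral_smul_measure,
        ENNReal.toReal_ofReal (by positivity), smul_eq_mul]
    have hinner : ∀ x : E, ∫ y, f y * ηf (t - k) y ∂(iterK κ (t + k) x)
        = (θ0 ^ (t - k))⁻¹ * ∫ y, h y ∂(iterK κ (t + k) x) := by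
      intro x
      rw [← integral_const_mul]
      refine integral_congr_ae (Filter.Eventually.of_forall fun y => ?_)
      rw [hhdef]
      simp only
      rw [hηf]
      ring
    calc (θ0 ^ (t + k))⁻¹ * ∫ x, (∫ y, f y * ηf (t - k) y ∂(iterK κ (t + k) x)) ∂ν
        = (θ0 ^ (t + k))⁻¹ *
            ((θ0 ^ (t - k))⁻¹ * ∫ x, (∫ y, h y ∂(iterK κ (t + k) x)) ∂ν) := by
          congr 1
          rw [← integral_const_mul]
          exact integral_congr_ae (Filter.Eventually.of_forall fun x => hinner x)
      _ = (θ0 ^ (t + k))⁻¹ *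
            ((θ0 ^ (t - k))⁻¹ * ∫ x, (∫ w, G w ∂(iterK κ t x)) ∂ν) := by
          congr 2
          exact integral_congr_ae hstep1
      _ = (θ0 ^ (t + k))⁻¹ * ((θ0 ^ (t - k))⁻¹ * (θ0 ^ t * ∫ w, G w ∂ν)) := by
          rw [hstep2]
      _ = (θ0 ^ t)⁻¹ * ∫ w, G w ∂ν := by
          rw [show (θ0 ^ (t + k))⁻¹ * ((θ0 ^ (t - k))⁻¹ * (θ0 ^ t * ∫ w, G w ∂ν))
              = ((θ0 ^ (t + k))⁻¹ * ((θ0 ^ (t - k))⁻¹ * θ0 ^ t)) * ∫ w, G w ∂ν by ring]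
          rw [hconst (t + k) (t - k) (by omega)]
  have key : ∀ j : Fin t,
      (θ0 ^ ((i : ℕ) + (j : ℕ)))⁻¹ *
          ∫ x, (∫ y, f y * ηf (2 * t - (i : ℕ) - (j : ℕ)) y
            ∂(iterK κ ((i : ℕ) + (j : ℕ)) x)) ∂ν
        = (θ0 ^ t)⁻¹ *
          ∫ x, (∫ y, f y * (∫ z, η z ∂(iterK κ (t - ((i + j : Fin t) : ℕ)) y))
            ∂(iterK κ (((i + j : Fin t)) : ℕ) x)) ∂ν := by
    intro j
    have hij : ((i + j : Fin t) : ℕ) = ((i : ℕ) + (j : ℕ)) % t := Fin.val_add i j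
    by_cases hc : (i : ℕ) + (j : ℕ) < t
    · have h1 : ((i + j : Fin t) : ℕ) = (i : ℕ) + (j : ℕ) := by
        rw [hij, Nat.mod_eq_of_lt hc]
      rw [h1, show 2 * t - (i : ℕ) - (j : ℕ) = 2 * t - ((i : ℕ) + (j : ℕ)) by omega]
      exact case1 _ hc
    · push_neg at hc
      have hit := i.isLt
      have hjt := j.isLt
      have h1 : ((i + j : Fin t) : ℕ) = (i : ℕ) + (j : ℕ) - t := by
        rw [hij, Nat.mod_eq_sub_mod hc, Nat.mod_eq_of_lt (by omega)]
      have hik : (i : ℕ) + (j : ℕ) = t + ((i : ℕ) + (j : ℕ) - t) := by omega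
      have hkt : (i : ℕ) + (j : ℕ) - t < t := by omega
      rw [h1, show 2 * t - (i : ℕ) - (j : ℕ) = t - ((i : ℕ) + (j : ℕ) - t) by omega]
      calc (θ0 ^ ((i : ℕ) + (j : ℕ)))⁻¹ *
            ∫ x, (∫ y, f y * ηf (t - ((i : ℕ) + (j : ℕ) - t)) y
              ∂(iterK κ ((i : ℕ) + (j : ℕ)) x)) ∂ν
          = (θ0 ^ (t + ((i : ℕ) + (j : ℕ) - t)))⁻¹ *
            ∫ x, (∫ y, f y * ηf (t - ((i : ℕ) + (j : ℕ) - t)) y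
              ∂(iterK κ (t + ((i : ℕ) + (j : ℕ) - t)) x)) ∂ν := by rw [← hik]
        _ = _ := case2 _ hkt
  rw [Finset.sum_congr rfl (fun j _ => key j), ← Finset.mul_sum]
  congr 1
  exact Fintype.sum_equiv (Equiv.addLeft i)
    (fun j => ∫ x, (∫ y, f y * (∫ z, η z ∂(iterK κ (t - ((i + j : Fin t) : ℕ)) y))
      ∂(iterK κ (((i + j : Fin t)) : ℕ) x)) ∂ν)
    (fun k => ∫ x, (∫ y, f y * (∫ z, η z ∂(iterK κ (t - (k : ℕ)) y))
      ∂(iterK κ ((k : ℕ)) x)) ∂ν)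
    (fun j => rfl)
end

section
/- (Uniqueness of the exponentially attracting QSD for Q.) Suppose |θ_0^{-kt} Q_k f(x) − η(x)ν(f)| ≤ C_Q α^k V(x) for all |f| ≤ V, k ≥ 0, x ∈ A_0. Then ν is the unique quasi-stationary distribution μ for Q satisfying μ(η) > 0 and μ(V) < ∞. -/
open MeasureTheory ProbabilityTheory
open Filter Topology

namespace Stmt17Aux

variable {X : Type*} [MeasurableSpace X] (κ : Kernel X X)

lemma iterK_succ (k : ℕ) (x : X) : iterK κ (k + 1) x = (iterK κ k x).bind κ :=
  Kernel.comp_apply κ (iterK κ k) x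

lemma iterK_one (x : X) : iterK κ 1 x = κ x := by
  rw [iterK_succ]
  show (Kernel.id x).bind κ = κ x
  rw [Kernel.id_apply, Measure.dirac_bind κ.measurable]

lemma measurable_klintegral (κ' : Kernel X X) {g : X → ENNReal} (hg : Measurable g) :
    Measurable fun x => ∫⁻ y, g y ∂(κ' x) :=
  (Measure.measurable_lintegral hg).comp κ'.measurable

lemma lintegral_iterK_succ {g : X → ENNReal} (hg : Measurable g) (k : ℕ) (x : X) :
    ∫⁻ y, g y ∂(iterK κ (k + 1) x) = ∫⁻ z, ∫⁻ y, g y ∂(κ z) ∂(iterK κ k x) := by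
  rw [iterK_succ, Measure.lintegral_bind κ.measurable.aemeasurable hg.aemeasurable]

lemma smul_bind (μ : Measure X) (c : ENNReal) {f : X → Measure X} (hf : Measurable f) :
    (c • μ).bind f = c • μ.bind f := by
  ext s hs
  rw [Measure.bind_apply hs hf.aemeasurable, Measure.smul_apply, Measure.bind_apply hs hf.aemeasurable,
    lintegral_smul_measure, smul_eq_mul]

lemma tendsto_geom (C D a : ℝ) (ha0 : 0 ≤ a) (ha1 : a < 1) :
    Tendsto (fun k : ℕ => C * a ^ k * D) atTop (𝓝 0) := by
  have h := (tendsto_pow_atTop_nhds_zero_of_lt_one ha0 ha1).const_mul C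
  have h2 := h.mul_const D
  simpa using h2

lemma tendsto_of_abs_sub_le {w b : ℕ → ℝ} {L : ℝ} (h : ∀ k, |w k - L| ≤ b k)
    (hb : Tendsto b atTop (𝓝 0)) : Tendsto w atTop (𝓝 L) := by
  rw [tendsto_iff_dist_tendsto_zero]
  simp only [Real.dist_eq]
  exact squeeze_zero (fun k => abs_nonneg _) h hb

lemma eq_of_abs_sub_le {A L : ℝ} {b : ℕ → ℝ} (h : ∀ k, |A - L| ≤ b k)
    (hb : Tendsto b atTop (𝓝 0)) : A = L := by
  have h0 : |A - L| ≤ 0 := ge_of_tendsto' hb fun k => h k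
  have h1 := abs_nonneg (A - L)
  have h2 : |A - L| = 0 := le_antisymm h0 h1
  have := abs_eq_zero.mp h2
  linarith

lemma integrable_of_le_V {V f : X → ℝ} (hf : Measurable f) (hfV : ∀ x, |f x| ≤ V x)
    {m : Measure X} (hfin : ∫⁻ y, ENNReal.ofReal (V y) ∂m ≠ ⊤) : Integrable f m := by
  refine ⟨hf.aestronglyMeasurable, ?_⟩
  rw [hasFiniteIntegral_iff_norm]
  refine lt_of_le_of_lt (lintegral_mono fun y => ?_) hfin.lt_top
  exact ENNReal.ofReal_le_ofReal ((Real.norm_eq_abs _) ▸ hfV y)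

lemma lintegral_eq_ofReal {f : X → ℝ} (hf0 : ∀ x, 0 ≤ f x) {m : Measure X}
    (hfi : Integrable f m) :
    ∫⁻ y, ENNReal.ofReal (f y) ∂m = ENNReal.ofReal (∫ y, f y ∂m) :=
  (ofReal_integral_eq_lintegral_ofReal hfi (Filter.Eventually.of_forall hf0)).symm

end Stmt17Aux

set_option maxHeartbeats 2000000 in
theorem stmt17
    {X : Type*} [MeasurableSpace X] [Nonempty X] (κ : Kernel X X) (t : ℕ)
    (V η : X → ℝ) (hVmeas : Measurable V) (hV1 : ∀ x, 1 ≤ V x)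
    (hηmeas : Measurable η) (hη0 : ∀ x, 0 ≤ η x) (hηne : ∃ x, η x ≠ 0)
    (hbdd : BddAbove (Set.range fun x => η x / V x))
    (ν : Measure X) [IsProbabilityMeasure ν]
    (hνV : Integrable V ν) (hνη : 0 < ∫ x, η x ∂ν)
    {θ0 CQ α : ℝ} (hθ0 : 0 < θ0) (hθ01 : θ0 ≤ 1) (hCQ : 0 ≤ CQ)
    (hα0 : 0 < α) (hα1 : α < 1)
    (hconv : ∀ f : X → ℝ, Measurable f → (∀ x, |f x| ≤ V x) →
      ∀ k : ℕ, ∀ x : X,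
        |(θ0 ^ (k * t))⁻¹ * (∫ y, f y ∂(iterK κ k x)) - η x * ∫ y, f y ∂ν|
          ≤ CQ * α ^ k * V x)
    :
    (∃ ρ : ℝ, 0 < ρ ∧ Measure.bind ν (fun x => iterK κ 1 x) = ENNReal.ofReal ρ • ν) ∧
      ∀ μ : Measure X, IsProbabilityMeasure μ →
        ∀ ρ : ℝ, 0 < ρ →
          Measure.bind μ (fun x => iterK κ 1 x) = ENNReal.ofReal ρ • μ →
          0 < ∫ x, η x ∂μ → Integrable V μ → μ = ν := by
  classical
  obtain ⟨u, hu⟩ := hbdd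
  set b := max u 1 with hbdef
  have hbpos : (0:ℝ) < b := lt_of_lt_of_le one_pos (le_max_right _ _)
  have hV0 : ∀ x, (0:ℝ) < V x := fun x => lt_of_lt_of_le one_pos (hV1 x)
  have hηb : ∀ x, η x ≤ b * V x := by
    intro x
    have h1 : η x / V x ≤ u := hu ⟨x, rfl⟩
    have h2 : η x / V x ≤ b := le_trans h1 (le_max_left _ _)
    exact (div_le_iff₀ (hV0 x)).mp h2
  have hνV1 : (1:ℝ) ≤ ∫ x, V x ∂ν := by
    have h := integral_mono (integrable_const 1) hνV hV1
    simpa using h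
  have hθt : (0:ℝ) < θ0 ^ t := pow_pos hθ0 t
  have hpowkt : ∀ k : ℕ, θ0 ^ (k * t) = (θ0 ^ t) ^ k := fun k => by rw [mul_comm, pow_mul]
  constructor
  · -- Existence: ν is a QSD with eigenvalue θ0 ^ t
    obtain ⟨x₀, hx₀'⟩ := hηne
    have hx₀ : 0 < η x₀ := lt_of_le_of_ne (hη0 x₀) (Ne.symm hx₀')
    have habsV : ∀ x, |V x| ≤ V x := fun x => le_of_eq (abs_of_nonneg (zero_le_one.trans (hV1 x)))
    have hνV0 : (0:ℝ) ≤ ∫ x, V x ∂ν := zero_le_one.trans hνV1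
    have hL : 0 < η x₀ * ∫ x, V x ∂ν := mul_pos hx₀ (lt_of_lt_of_le one_pos hνV1)
    have hgeo0 := Stmt17Aux.tendsto_geom CQ (V x₀) α hα0.le hα1
    obtain ⟨K, hK⟩ := Filter.eventually_atTop.mp (hgeo0.eventually (gt_mem_nhds hL))
    have hVint : ∀ k, K ≤ k → Integrable V (iterK κ k x₀) := by
      intro k hk
      by_contra hni
      have h0 : ∫ y, V y ∂(iterK κ k x₀) = 0 := integral_undef hni
      have h := hconv V hVmeas habsV k x₀
      rw [h0, mul_zero, zero_sub, abs_neg, abs_of_nonneg (mul_nonneg (hη0 x₀) hνV0)] at h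
      exact absurd h (not_le.mpr (hK k hk))
    have hVfin : ∀ k, K ≤ k → ∫⁻ y, ENNReal.ofReal (V y) ∂(iterK κ k x₀) ≠ ⊤ := by
      intro k hk
      rw [Stmt17Aux.lintegral_eq_ofReal (fun x => zero_le_one.trans (hV1 x)) (hVint k hk)]
      exact ENNReal.ofReal_ne_top
    set B : Set X := {y | ∫⁻ z, ENNReal.ofReal (V z) ∂(κ y) = ⊤} with hBdef
    have hBmeas : MeasurableSet B :=
      (Stmt17Aux.measurable_klintegral κ hVmeas.ennreal_ofReal) (measurableSet_singleton ⊤)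
    have hQB : ∀ k, K ≤ k → (iterK κ k x₀) B = 0 := by
      intro k hk
      have hfin := hVfin (k + 1) (hk.trans (Nat.le_succ k))
      rw [Stmt17Aux.lintegral_iterK_succ κ hVmeas.ennreal_ofReal k x₀] at hfin
      have hae := ae_lt_top (Stmt17Aux.measurable_klintegral κ hVmeas.ennreal_ofReal) hfin
      have h := ae_iff.mp hae
      have hset : B = {y | ¬ (∫⁻ z, ENNReal.ofReal (V z) ∂(κ y)) < ⊤} := by
        ext y; simp [hBdef, lt_top_iff_ne_top]
      rw [hset]
      exact h
    have hindB0 : ∀ x, 0 ≤ Set.indicator B (1 : X → ℝ) x :=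
      fun x => Set.indicator_nonneg (fun _ _ => zero_le_one) x
    have hindBV : ∀ x, |Set.indicator B (1 : X → ℝ) x| ≤ V x := by
      intro x
      rw [abs_of_nonneg (hindB0 x)]
      by_cases hxs : x ∈ B
      · rw [Set.indicator_of_mem hxs]; exact hV1 x
      · rw [Set.indicator_of_notMem hxs]; exact zero_le_one.trans (hV1 x)
    have hνB : ν B = 0 := by
      have hbound : ∀ k, K ≤ k → η x₀ * (ν B).toReal ≤ CQ * α ^ k * V x₀ := by
        intro k hk
        have h := hconv (Set.indicator B (1 : X → ℝ)) (measurable_one.indicator hBmeas)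
          hindBV k x₀
        rw [integral_indicator_one hBmeas, integral_indicator_one hBmeas, measureReal_def,
          measureReal_def, hQB k hk,
          ENNReal.toReal_zero, mul_zero, zero_sub, abs_neg,
          abs_of_nonneg (mul_nonneg (hη0 x₀) ENNReal.toReal_nonneg)] at h
        exact h
      have h0 : η x₀ * (ν B).toReal ≤ 0 :=
        ge_of_tendsto hgeo0 (Filter.eventually_atTop.mpr ⟨K, hbound⟩)
      have h1 : (ν B).toReal = 0 := by
        have h2 := ENNReal.toReal_nonneg (a := ν B)
        nlinarith
      rcases (ENNReal.toReal_eq_zero_iff _).mp h1 with h | h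
      · exact h
      · exact absurd h (measure_ne_top ν B)
    -- main identity for nonnegative f ≤ V
    have main : ∀ f : X → ℝ, Measurable f → (∀ x, 0 ≤ f x) → (∀ x, f x ≤ V x) →
        Integrable (fun x => (∫⁻ z, ENNReal.ofReal (f z) ∂(κ x)).toReal) ν ∧
        ∫ x, (∫⁻ z, ENNReal.ofReal (f z) ∂(κ x)).toReal ∂ν = θ0 ^ t * ∫ z, f z ∂ν := by
      intro f hf hf0 hfV
      have habs : ∀ x, |f x| ≤ V x := fun x => by
        rw [abs_of_nonneg (hf0 x)]; exact hfV x
      have hfν : Integrable f ν := Integrable.mono' hνV hf.aestronglyMeasurable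
        (.of_forall fun x => (Real.norm_eq_abs _) ▸ habs x)
      have hF0 : 0 ≤ ∫ z, f z ∂ν := integral_nonneg hf0
      have hFV : ∫ z, f z ∂ν ≤ ∫ z, V z ∂ν := integral_mono hfν hνV hfV
      set c := θ0 ^ t * (b * (∫ x, V x ∂ν) + CQ * α) with hcdef
      have hc : 0 < c := by
        have h1 : 0 < b * ∫ x, V x ∂ν := mul_pos hbpos (lt_of_lt_of_le one_pos hνV1)
        have h2 := mul_nonneg hCQ hα0.le
        have := hθt
        nlinarith
      set g₀ : X → ℝ := fun y => (∫⁻ z, ENNReal.ofReal (f z) ∂(κ y)).toReal with hg₀def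
      have hg₀meas : Measurable g₀ :=
        (Stmt17Aux.measurable_klintegral κ hf.ennreal_ofReal).ennreal_toReal
      have hg₀0 : ∀ y, 0 ≤ g₀ y := fun y => ENNReal.toReal_nonneg
      have hg₀B : ∀ y, y ∉ B → g₀ y = ∫ z, f z ∂(κ y) ∧ g₀ y ≤ c * V y := by
        intro y hy
        have hyfin : ∫⁻ z, ENNReal.ofReal (V z) ∂(κ y) ≠ ⊤ := hy
        have hfint : Integrable f (κ y) := Stmt17Aux.integrable_of_le_V hf habs hyfin
        have heq : g₀ y = ∫ z, f z ∂(κ y) := by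
          rw [hg₀def]
          dsimp only
          rw [Stmt17Aux.lintegral_eq_ofReal hf0 hfint,
            ENNReal.toReal_ofReal (integral_nonneg hf0)]
        refine ⟨heq, ?_⟩
        have h := (abs_le.mp (hconv f hf habs 1 y)).2
        simp only [one_mul, pow_one] at h
        rw [Stmt17Aux.iterK_one κ y] at h
        rw [heq]
        have hηF : η y * (∫ z, f z ∂ν) ≤ b * V y * ∫ z, V z ∂ν := by
          have h1 := mul_le_mul (hηb y) hFV hF0 (mul_nonneg hbpos.le (hV0 y).le)
          linarith
        have h2 : ∫ z, f z ∂(κ y) ≤ θ0 ^ t * (η y * (∫ z, f z ∂ν) + CQ * α * V y) := by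
          have h3 : (θ0 ^ t)⁻¹ * ∫ z, f z ∂(κ y)
              ≤ η y * (∫ z, f z ∂ν) + CQ * α * V y := by linarith
          calc ∫ z, f z ∂(κ y) = θ0 ^ t * ((θ0 ^ t)⁻¹ * ∫ z, f z ∂(κ y)) := by
                field_simp
          _ ≤ θ0 ^ t * (η y * (∫ z, f z ∂ν) + CQ * α * V y) :=
                mul_le_mul_of_nonneg_left h3 hθt.le
        calc ∫ z, f z ∂(κ y) ≤ θ0 ^ t * (η y * (∫ z, f z ∂ν) + CQ * α * V y) := h2
        _ ≤ θ0 ^ t * (b * V y * (∫ z, V z ∂ν) + CQ * α * V y) := by nlinarith [hθt, hηF]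
        _ = c * V y := by rw [hcdef]; ring
      set g : X → ℝ := fun y => min (g₀ y) (c * V y) / c with hgdef
      have hgmeas : Measurable g := (hg₀meas.min (hVmeas.const_mul c)).div_const c
      have hg0 : ∀ y, 0 ≤ g y := fun y =>
        div_nonneg (le_min (hg₀0 y) (mul_nonneg hc.le (hV0 y).le)) hc.le
      have hgV : ∀ y, g y ≤ V y := by
        intro y
        rw [hgdef]
        dsimp only
        rw [div_le_iff₀ hc]
        calc min (g₀ y) (c * V y) ≤ c * V y := min_le_right _ _
        _ = V y * c := mul_comm _ _
      have hgabs : ∀ y, |g y| ≤ V y := fun y => by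
        rw [abs_of_nonneg (hg0 y)]; exact hgV y
      have hcg : ∀ y, y ∉ B → c * g y = g₀ y := by
        intro y hy
        rw [hgdef]
        dsimp only
        rw [min_eq_left (hg₀B y hy).2, mul_comm, div_mul_cancel₀ _ hc.ne']
      have hg₀int : Integrable g₀ ν := by
        refine Integrable.mono' (hνV.const_mul c) hg₀meas.aestronglyMeasurable ?_
        filter_upwards [measure_eq_zero_iff_ae_notMem.mp hνB] with y hy
        rw [Real.norm_eq_abs, abs_of_nonneg (hg₀0 y)]
        exact (hg₀B y hy).2
      have hid : ∀ k, K ≤ k →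
          ∫ z, f z ∂(iterK κ (k + 1) x₀) = c * ∫ y, g y ∂(iterK κ k x₀) := by
        intro k hk
        have haeB : ∀ᵐ y ∂(iterK κ k x₀), y ∉ B := measure_eq_zero_iff_ae_notMem.mp (hQB k hk)
        have hl1 : ∫⁻ z, ENNReal.ofReal (f z) ∂(iterK κ (k + 1) x₀)
            = ∫⁻ y, ENNReal.ofReal (c * g y) ∂(iterK κ k x₀) := by
          rw [Stmt17Aux.lintegral_iterK_succ κ hf.ennreal_ofReal k x₀]
          refine lintegral_congr_ae ?_
          filter_upwards [haeB] with y hy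
          have hfin : ∫⁻ z, ENNReal.ofReal (f z) ∂(κ y) ≠ ⊤ := by
            refine ne_top_of_le_ne_top hy (lintegral_mono fun z => ?_)
            exact ENNReal.ofReal_le_ofReal (hfV z)
          rw [hcg y hy, hg₀def]
          exact (ENNReal.ofReal_toReal hfin).symm
        have hintf : Integrable f (iterK κ (k + 1) x₀) :=
          Stmt17Aux.integrable_of_le_V hf habs (hVfin (k + 1) (hk.trans (Nat.le_succ k)))
        have hintcg : Integrable (fun y => c * g y) (iterK κ k x₀) := by
          refine Integrable.mono' ((hVint k hk).const_mul c)
            (hgmeas.const_mul c).aestronglyMeasurable ?_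
          refine .of_forall fun y => ?_
          rw [Real.norm_eq_abs, abs_of_nonneg (mul_nonneg hc.le (hg0 y))]
          exact mul_le_mul_of_nonneg_left (hgV y) hc.le
        have h2 : ENNReal.ofReal (∫ z, f z ∂(iterK κ (k + 1) x₀))
            = ENNReal.ofReal (∫ y, c * g y ∂(iterK κ k x₀)) := by
          rw [← Stmt17Aux.lintegral_eq_ofReal hf0 hintf,
            ← Stmt17Aux.lintegral_eq_ofReal (fun y => mul_nonneg hc.le (hg0 y)) hintcg, hl1]
        have h3 := congrArg ENNReal.toReal h2
        rw [ENNReal.toReal_ofReal (integral_nonneg hf0), ENNReal.toReal_ofReal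
          (integral_nonneg (fun y => mul_nonneg hc.le (hg0 y)))] at h3
        rw [h3, integral_const_mul]
      have hlim1 : Tendsto (fun k : ℕ => (θ0 ^ (k * t))⁻¹ * ∫ y, g y ∂(iterK κ k x₀))
          atTop (𝓝 (η x₀ * ∫ y, g y ∂ν)) :=
        Stmt17Aux.tendsto_of_abs_sub_le (fun k => hconv g hgmeas hgabs k x₀) hgeo0
      have hlimf : Tendsto (fun k : ℕ => (θ0 ^ (k * t))⁻¹ * ∫ z, f z ∂(iterK κ k x₀))
          atTop (𝓝 (η x₀ * ∫ z, f z ∂ν)) :=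
        Stmt17Aux.tendsto_of_abs_sub_le (fun k => hconv f hf habs k x₀) hgeo0
      have hlim2 : Tendsto
          (fun k : ℕ => (θ0 ^ ((k + 1) * t))⁻¹ * ∫ z, f z ∂(iterK κ (k + 1) x₀))
          atTop (𝓝 (η x₀ * ∫ z, f z ∂ν)) :=
        hlimf.comp (tendsto_add_atTop_nat 1)
      have hu1 : Tendsto (fun k : ℕ => (θ0 ^ (k * t))⁻¹ * ∫ z, f z ∂(iterK κ (k + 1) x₀))
          atTop (𝓝 (θ0 ^ t * (η x₀ * ∫ z, f z ∂ν))) := by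
        refine (hlim2.const_mul (θ0 ^ t)).congr fun k => ?_
        have hpe : θ0 ^ ((k + 1) * t) = θ0 ^ (k * t) * θ0 ^ t := by
          rw [add_mul, one_mul, pow_add]
        rw [hpe]
        have h1 : θ0 ^ (k * t) ≠ 0 := (pow_pos hθ0 _).ne'
        have h2 : θ0 ^ t ≠ 0 := hθt.ne'
        field_simp
      have hu2 : Tendsto (fun k : ℕ => (θ0 ^ (k * t))⁻¹ * ∫ z, f z ∂(iterK κ (k + 1) x₀))
          atTop (𝓝 (c * (η x₀ * ∫ y, g y ∂ν))) := by
        refine Tendsto.congr' ?_ (hlim1.const_mul c)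
        filter_upwards [Filter.eventually_atTop.mpr ⟨K, fun k hk => hid k hk⟩] with k hk
        rw [hk]; ring
      have hkey := tendsto_nhds_unique hu2 hu1
      have h2 : η x₀ * (c * ∫ y, g y ∂ν) = η x₀ * (θ0 ^ t * ∫ z, f z ∂ν) := by
        linear_combination hkey
      have hνg : c * ∫ y, g y ∂ν = θ0 ^ t * ∫ z, f z ∂ν := mul_left_cancel₀ hx₀.ne' h2
      have hg₀ae : ∫ y, c * g y ∂ν = ∫ y, g₀ y ∂ν := by
        refine integral_congr_ae ?_
        filter_upwards [measure_eq_zero_iff_ae_notMem.mp hνB] with y hy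
        exact hcg y hy
      refine ⟨hg₀int, ?_⟩
      calc ∫ x, g₀ x ∂ν = ∫ y, c * g y ∂ν := hg₀ae.symm
      _ = c * ∫ y, g y ∂ν := integral_const_mul c g
      _ = θ0 ^ t * ∫ z, f z ∂ν := hνg
    -- conclude
    refine ⟨θ0 ^ t, hθt, ?_⟩
    ext s hs
    have hind0 : ∀ x, 0 ≤ Set.indicator s (1 : X → ℝ) x :=
      fun x => Set.indicator_nonneg (fun _ _ => zero_le_one) x
    have hindV : ∀ x, Set.indicator s (1 : X → ℝ) x ≤ V x := by
      intro x
      by_cases hxs : x ∈ s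
      · rw [Set.indicator_of_mem hxs]; exact hV1 x
      · rw [Set.indicator_of_notMem hxs]; exact zero_le_one.trans (hV1 x)
    obtain ⟨hmint, hmeq⟩ := main (Set.indicator s (1 : X → ℝ))
      (measurable_one.indicator hs) hind0 hindV
    have hbindapp : (Measure.bind ν fun x => iterK κ 1 x) s = ∫⁻ x, iterK κ 1 x s ∂ν :=
      Measure.bind_apply hs (iterK κ 1).measurable.aemeasurable
    have h1 : ∫⁻ x, (iterK κ 1) x s ∂ν
        = ∫⁻ x, ENNReal.ofReal
            ((∫⁻ z, ENNReal.ofReal (Set.indicator s (1 : X → ℝ) z) ∂(κ x)).toReal) ∂ν := by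
      refine lintegral_congr_ae ?_
      filter_upwards [measure_eq_zero_iff_ae_notMem.mp hνB] with x hx
      rw [Stmt17Aux.iterK_one κ x]
      have hof : ∫⁻ z, ENNReal.ofReal (Set.indicator s (1 : X → ℝ) z) ∂(κ x) = κ x s := by
        have hptw : (fun z => ENNReal.ofReal (Set.indicator s (1 : X → ℝ) z))
            = fun z => Set.indicator s (1 : X → ENNReal) z := by
          funext z
          by_cases hz : z ∈ s
          · simp [Set.indicator_of_mem hz]
          · simp [Set.indicator_of_notMem hz]
        rw [hptw]
        exact lintegral_indicator_one hs
      have hfin : κ x s ≠ ⊤ := by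
        refine ne_top_of_le_ne_top hx ?_
        rw [← hof]
        refine lintegral_mono fun z => ENNReal.ofReal_le_ofReal (hindV z)
      rw [hof, ENNReal.ofReal_toReal hfin]
    rw [hbindapp, h1,
      Stmt17Aux.lintegral_eq_ofReal (fun x => ENNReal.toReal_nonneg) hmint, hmeq,
      integral_indicator_one hs, measureReal_def, ENNReal.ofReal_mul hθt.le,
      ENNReal.ofReal_toReal (measure_ne_top ν s)]
    rw [Measure.smul_apply, smul_eq_mul]
  · -- Uniqueness
    intro μ hμprob ρ hρ hbind hμη hμV
    have hηintμ : Integrable η μ := by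
      refine Integrable.mono' (hμV.const_mul b) hηmeas.aestronglyMeasurable ?_
      exact .of_forall fun x => by
        rw [Real.norm_eq_abs, abs_of_nonneg (hη0 x)]; exact hηb x
    have hμV1 : (1:ℝ) ≤ ∫ x, V x ∂μ := by
      have h := integral_mono (integrable_const 1) hμV hV1
      simpa using h
    have hμVpos : (0:ℝ) < ∫ x, V x ∂μ := lt_of_lt_of_le one_pos hμV1
    -- iterated eigenmeasure identity
    have hbind' : Measure.bind μ (fun x => κ x) = ENNReal.ofReal ρ • μ := by
      rw [← hbind]; congr 1; funext x; exact (Stmt17Aux.iterK_one κ x).symm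
    have hbk : ∀ k : ℕ, Measure.bind μ (fun x => iterK κ k x) = ENNReal.ofReal (ρ ^ k) • μ := by
      intro k; induction k with
      | zero =>
        have h0 : (fun x => iterK κ 0 x) = fun x : X => Measure.dirac x := by
          funext x; exact Kernel.id_apply x
        rw [h0]
        simp only [pow_zero, ENNReal.ofReal_one, one_smul]
        exact Measure.bind_dirac
      | succ k ih =>
        have h1 : (fun x => iterK κ (k + 1) x) = fun x => (iterK κ k x).bind κ := by
          funext x; exact Stmt17Aux.iterK_succ κ k x
        rw [h1, ← Measure.bind_bind (iterK κ k).measurable.aemeasurable κ.measurable.aemeasurable, ih,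
          Stmt17Aux.smul_bind _ _ κ.measurable, hbind', smul_smul,
          ← ENNReal.ofReal_mul (pow_nonneg hρ.le k), ← pow_succ]
    have hlint : ∀ (g : X → ENNReal), Measurable g → ∀ k : ℕ,
        ∫⁻ x, (∫⁻ y, g y ∂(iterK κ k x)) ∂μ = ENNReal.ofReal (ρ ^ k) * ∫⁻ x, g x ∂μ := by
      intro g hg k
      rw [← Measure.lintegral_bind (iterK κ k).measurable.aemeasurable hg.aemeasurable, hbk k, lintegral_smul_measure, smul_eq_mul]
    have hVae : ∀ k : ℕ, ∀ᵐ x ∂μ, (∫⁻ y, ENNReal.ofReal (V y) ∂(iterK κ k x)) ≠ ⊤ := by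
      intro k
      have hm := Stmt17Aux.measurable_klintegral (iterK κ k) hVmeas.ennreal_ofReal
      have htot : ∫⁻ x, (∫⁻ y, ENNReal.ofReal (V y) ∂(iterK κ k x)) ∂μ ≠ ⊤ := by
        rw [hlint _ hVmeas.ennreal_ofReal k,
          Stmt17Aux.lintegral_eq_ofReal (fun x => zero_le_one.trans (hV1 x)) hμV]
        exact ENNReal.mul_ne_top ENNReal.ofReal_ne_top ENNReal.ofReal_ne_top
      exact (ae_lt_top hm htot).mono fun x hx => hx.ne
    have key : ∀ f : X → ℝ, Measurable f → (∀ x, 0 ≤ f x) → (∀ x, f x ≤ V x) → ∀ k : ℕ,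
        |ρ ^ k * ∫ x, f x ∂μ - θ0 ^ (k * t) * ((∫ x, η x ∂μ) * ∫ x, f x ∂ν)|
          ≤ θ0 ^ (k * t) * (CQ * α ^ k * ∫ x, V x ∂μ) := by
      intro f hf hf0 hfV k
      have habs : ∀ x, |f x| ≤ V x := fun x => by
        rw [abs_of_nonneg (hf0 x)]; exact hfV x
      have hfν : Integrable f ν := Integrable.mono' hνV hf.aestronglyMeasurable
        (.of_forall fun x => (Real.norm_eq_abs _) ▸ habs x)
      have hfμ : Integrable f μ := Integrable.mono' hμV hf.aestronglyMeasurable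
        (.of_forall fun x => (Real.norm_eq_abs _) ▸ habs x)
      have hF0 : 0 ≤ ∫ x, f x ∂ν := integral_nonneg hf0
      have hfμ0 : 0 ≤ ∫ x, f x ∂μ := integral_nonneg hf0
      have hμη0 : 0 ≤ ∫ x, η x ∂μ := integral_nonneg hη0
      have hP : (0:ℝ) < θ0 ^ (k * t) := pow_pos hθ0 _
      set P := θ0 ^ (k * t) with hPdef
      set F := ∫ x, f x ∂ν with hFdef
      set G : X → ENNReal := fun x => ∫⁻ y, ENNReal.ofReal (f y) ∂(iterK κ k x) with hGdef
      have hGmeas : Measurable G := Stmt17Aux.measurable_klintegral _ hf.ennreal_ofReal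
      have hGint : ∫⁻ x, G x ∂μ = ENNReal.ofReal (ρ ^ k * ∫ x, f x ∂μ) := by
        rw [hGdef, hlint _ hf.ennreal_ofReal k, Stmt17Aux.lintegral_eq_ofReal hf0 hfμ,
          ← ENNReal.ofReal_mul (pow_nonneg hρ.le k)]
      have hae : ∀ᵐ x ∂μ, G x = ENNReal.ofReal (∫ y, f y ∂(iterK κ k x)) := by
        filter_upwards [hVae k] with x hx
        exact Stmt17Aux.lintegral_eq_ofReal hf0 (Stmt17Aux.integrable_of_le_V hf habs hx)
      have hCQk : (0:ℝ) ≤ CQ * α ^ k := mul_nonneg hCQ (pow_nonneg hα0.le k)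
      -- upper bound
      have hub : ρ ^ k * ∫ x, f x ∂μ ≤ P * ((∫ x, η x ∂μ) * F + CQ * α ^ k * ∫ x, V x ∂μ) := by
        have h1 : ∫⁻ x, G x ∂μ
            ≤ ∫⁻ x, ENNReal.ofReal (P * (η x * F + CQ * α ^ k * V x)) ∂μ := by
          refine lintegral_mono_ae ?_
          filter_upwards [hae] with x hx
          rw [hx]
          refine ENNReal.ofReal_le_ofReal ?_
          have h2 := (abs_le.mp (hconv f hf habs k x)).2
          have h3 : P⁻¹ * (∫ y, f y ∂(iterK κ k x)) ≤ η x * F + CQ * α ^ k * V x := by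
            rw [hPdef, hFdef]; linarith
          calc ∫ y, f y ∂(iterK κ k x) = P * (P⁻¹ * ∫ y, f y ∂(iterK κ k x)) := by
                field_simp
          _ ≤ P * (η x * F + CQ * α ^ k * V x) := mul_le_mul_of_nonneg_left h3 hP.le
        have hint2 : Integrable (fun x => P * (η x * F + CQ * α ^ k * V x)) μ :=
          Integrable.const_mul ((hηintμ.mul_const F).add (hμV.const_mul (CQ * α ^ k))) P
        have h4 : ∫⁻ x, ENNReal.ofReal (P * (η x * F + CQ * α ^ k * V x)) ∂μ
            = ENNReal.ofReal (∫ x, P * (η x * F + CQ * α ^ k * V x) ∂μ) :=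
          Stmt17Aux.lintegral_eq_ofReal
            (fun x => mul_nonneg hP.le (add_nonneg (mul_nonneg (hη0 x) hF0)
              (mul_nonneg hCQk (hV0 x).le))) hint2
        have h5 : ∫ x, P * (η x * F + CQ * α ^ k * V x) ∂μ
            = P * ((∫ x, η x ∂μ) * F + CQ * α ^ k * ∫ x, V x ∂μ) := by
          rw [show (fun x => P * (η x * F + CQ * α ^ k * V x))
              = fun x => P * F * η x + P * (CQ * α ^ k) * V x from funext fun x => by ring]
          rw [integral_add ((hηintμ.const_mul _)) (hμV.const_mul _), integral_const_mul,
            integral_const_mul]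
          ring
        rw [hGint, h4, h5] at h1
        exact (ENNReal.ofReal_le_ofReal_iff (mul_nonneg hP.le (add_nonneg
          (mul_nonneg hμη0 hF0) (mul_nonneg hCQk (zero_le_one.trans hμV1))))).mp h1
      -- lower bound
      have hlb : P * ((∫ x, η x ∂μ) * F)
          ≤ ρ ^ k * ∫ x, f x ∂μ + P * (CQ * α ^ k * ∫ x, V x ∂μ) := by
        have h1 : ∫⁻ x, ENNReal.ofReal (P * F * η x) ∂μ
            ≤ ∫⁻ x, (G x + ENNReal.ofReal (P * (CQ * α ^ k) * V x)) ∂μ := by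
          refine lintegral_mono_ae ?_
          filter_upwards [hae] with x hx
          have h2 := (abs_le.mp (hconv f hf habs k x)).1
          have h3 : P * F * η x ≤ (∫ y, f y ∂(iterK κ k x)) + P * (CQ * α ^ k) * V x := by
            have h4 : P * (η x * F - CQ * α ^ k * V x)
                ≤ P * (P⁻¹ * ∫ y, f y ∂(iterK κ k x)) := by
              refine mul_le_mul_of_nonneg_left ?_ hP.le
              rw [hPdef, hFdef]; linarith
            have h5 : P * (P⁻¹ * ∫ y, f y ∂(iterK κ k x)) = ∫ y, f y ∂(iterK κ k x) := by
              field_simp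
            nlinarith [h4, h5]
          calc ENNReal.ofReal (P * F * η x)
              ≤ ENNReal.ofReal ((∫ y, f y ∂(iterK κ k x)) + P * (CQ * α ^ k) * V x) :=
                ENNReal.ofReal_le_ofReal h3
          _ ≤ ENNReal.ofReal (∫ y, f y ∂(iterK κ k x))
                + ENNReal.ofReal (P * (CQ * α ^ k) * V x) := ENNReal.ofReal_add_le
          _ = G x + ENNReal.ofReal (P * (CQ * α ^ k) * V x) := by rw [hx]
        rw [lintegral_add_left hGmeas, hGint] at h1
        have hL : ∫⁻ x, ENNReal.ofReal (P * F * η x) ∂μ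
            = ENNReal.ofReal (P * ((∫ x, η x ∂μ) * F)) := by
          rw [Stmt17Aux.lintegral_eq_ofReal
            (fun x => mul_nonneg (mul_nonneg hP.le hF0) (hη0 x)) (hηintμ.const_mul _),
            integral_const_mul]
          congr 1; ring
        have hR : ∫⁻ x, ENNReal.ofReal (P * (CQ * α ^ k) * V x) ∂μ
            = ENNReal.ofReal (P * (CQ * α ^ k * ∫ x, V x ∂μ)) := by
          rw [Stmt17Aux.lintegral_eq_ofReal
            (fun x => mul_nonneg (mul_nonneg hP.le hCQk) (hV0 x).le) (hμV.const_mul _),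
            integral_const_mul]
          congr 1; ring
        rw [hL, hR, ← ENNReal.ofReal_add (mul_nonneg (pow_nonneg hρ.le k) hfμ0)
          (mul_nonneg hP.le (mul_nonneg hCQk (zero_le_one.trans hμV1)))] at h1
        exact (ENNReal.ofReal_le_ofReal_iff (add_nonneg
          (mul_nonneg (pow_nonneg hρ.le k) hfμ0)
          (mul_nonneg hP.le (mul_nonneg hCQk (zero_le_one.trans hμV1))))).mp h1
      rw [abs_le]
      constructor
      · linarith [hlb]
      · linarith [hub]
    -- divided form
    set r := ρ / θ0 ^ t with hrdef
    have key2 : ∀ f : X → ℝ, Measurable f → (∀ x, 0 ≤ f x) → (∀ x, f x ≤ V x) → ∀ k : ℕ,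
        |r ^ k * ∫ x, f x ∂μ - (∫ x, η x ∂μ) * ∫ x, f x ∂ν|
          ≤ CQ * α ^ k * ∫ x, V x ∂μ := by
      intro f hf hf0 hfV k
      have h := key f hf hf0 hfV k
      rw [hpowkt k] at h
      have hPk : (0:ℝ) < (θ0 ^ t) ^ k := pow_pos hθt k
      have he : r ^ k * ∫ x, f x ∂μ - (∫ x, η x ∂μ) * ∫ x, f x ∂ν
          = (ρ ^ k * ∫ x, f x ∂μ
              - (θ0 ^ t) ^ k * ((∫ x, η x ∂μ) * ∫ x, f x ∂ν)) / (θ0 ^ t) ^ k := by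
        rw [hrdef, div_pow]
        field_simp
      rw [he, abs_div, abs_of_pos hPk, div_le_iff₀ hPk]
      exact h.trans_eq (by ring)
    have hgeo := Stmt17Aux.tendsto_geom CQ (∫ x, V x ∂μ) α hα0.le hα1
    have hVlim : Tendsto (fun k : ℕ => r ^ k * ∫ x, V x ∂μ) atTop
        (𝓝 ((∫ x, η x ∂μ) * ∫ x, V x ∂ν)) :=
      Stmt17Aux.tendsto_of_abs_sub_le
        (key2 V hVmeas (fun x => zero_le_one.trans (hV1 x)) (fun x => le_refl _)) hgeo
    have hrlim : Tendsto (fun k : ℕ => r ^ k) atTop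
        (𝓝 ((∫ x, η x ∂μ) * (∫ x, V x ∂ν) * (∫ x, V x ∂μ)⁻¹)) := by
      have h := hVlim.mul_const (∫ x, V x ∂μ)⁻¹
      refine h.congr fun k => ?_
      field_simp
    have hc : 0 < (∫ x, η x ∂μ) * (∫ x, V x ∂ν) * (∫ x, V x ∂μ)⁻¹ :=
      mul_pos (mul_pos hμη (lt_of_lt_of_le one_pos hνV1)) (inv_pos.mpr hμVpos)
    have hsh : Tendsto (fun k : ℕ => r ^ (k + 1)) atTop
        (𝓝 ((∫ x, η x ∂μ) * (∫ x, V x ∂ν) * (∫ x, V x ∂μ)⁻¹)) :=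
      hrlim.comp (tendsto_add_atTop_nat 1)
    have hsh2 : Tendsto (fun k : ℕ => r ^ (k + 1)) atTop
        (𝓝 (r * ((∫ x, η x ∂μ) * (∫ x, V x ∂ν) * (∫ x, V x ∂μ)⁻¹))) :=
      (hrlim.const_mul r).congr fun k => (pow_succ' r k).symm
    have hrc := tendsto_nhds_unique hsh2 hsh
    have hr1 : r = 1 := by
      have h0 : (r - 1) * ((∫ x, η x ∂μ) * (∫ x, V x ∂ν) * (∫ x, V x ∂μ)⁻¹) = 0 := by
        nlinarith [hrc]
      rcases mul_eq_zero.mp h0 with h | h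
      · linarith
      · exact absurd h hc.ne'
    have hfeq : ∀ f : X → ℝ, Measurable f → (∀ x, 0 ≤ f x) → (∀ x, f x ≤ V x) →
        ∫ x, f x ∂μ = (∫ x, η x ∂μ) * ∫ x, f x ∂ν := by
      intro f hf hf0 hfV
      refine Stmt17Aux.eq_of_abs_sub_le (fun k => ?_) hgeo
      have h := key2 f hf hf0 hfV k
      rwa [hr1, one_pow, one_mul] at h
    have hμη1 : (∫ x, η x ∂μ) = 1 := by
      have h1 := hfeq (fun _ => (1:ℝ)) measurable_const (fun _ => zero_le_one) hV1
      simp only [integral_const, probReal_univ, measure_univ, ENNReal.toReal_one, smul_eq_mul,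
        one_mul, mul_one] at h1
      linarith
    ext s hs
    have hind0 : ∀ x, 0 ≤ Set.indicator s (1 : X → ℝ) x :=
      fun x => Set.indicator_nonneg (fun _ _ => zero_le_one) x
    have hindV : ∀ x, Set.indicator s (1 : X → ℝ) x ≤ V x := by
      intro x
      by_cases hxs : x ∈ s
      · rw [Set.indicator_of_mem hxs]; exact hV1 x
      · rw [Set.indicator_of_notMem hxs]; exact zero_le_one.trans (hV1 x)
    have h1 := hfeq (Set.indicator s (1 : X → ℝ)) (measurable_one.indicator hs) hind0 hindV
    rw [integral_indicator_one hs, integral_indicator_one hs, hμη1, one_mul, measureReal_def, measureReal_def] at h1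
    exact (ENNReal.toReal_eq_toReal_iff' (measure_ne_top μ s) (measure_ne_top ν s)).mp h1
end
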